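/- arXiv:1606.05628 — 8 statements merged into one kernel-verified Lean document; each statement's English description precedes it below -/
import Mathlib

section
/- Let G be an ordered graph on N vertices with at least εN² edges, where ε > 0 and N ≥ n/ε. Then G contains the alternating path P_n on n vertices as an ordered subgraph, where the alternating path P_n is the ordering v₁ ≺ v₃ ≺ v₅ ≺ … ≺ v_n ≺ v_{n-1} ≺ … ≺ v₂ (for n odd; analogously for n even) of the path with edges v_i v_{i+1}. -/
/-- Position of the `j`-th vertex (0-indexed) of the path in the alternating order. -/
def altPos (n j : ℕ) : ℕ := if j % 2 = 0 then j / 2 else n - (j + 1) / 2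

/-- `pathRel n i j` : positions `i`, `j` host consecutive path vertices. -/
def pathRel (n i j : ℕ) : Prop := ∃ m, m + 1 < n ∧ i = altPos n m ∧ j = altPos n (m + 1)

/-- The alternating path on `n` vertices, as an ordered graph on `Fin n`. -/
def altPath (n : ℕ) : SimpleGraph (Fin n) :=
  SimpleGraph.fromRel (fun a b => pathRel n a.val b.val)

/-- `H` is an ordered subgraph of `G`: a strictly monotone edge-preserving embedding. -/
def IsOrderedSubgraph {m N : ℕ} (H : SimpleGraph (Fin m)) (G : SimpleGraph (Fin N)) : Prop :=
  ∃ f : Fin m → Fin N, StrictMono f ∧ ∀ u v, H.Adj u v → G.Adj (f u) (f v)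

namespace AltProof

/-- Nested alternating zig-zag chains: `Zag G s t a b d` means there is an
alternating nested path with `s` "left" vertices (increasing, last one `a`) and
`t` "right" vertices (decreasing, last one `b`); `d = true` iff the last added
vertex was on the right side. -/
inductive Zag {N : ℕ} (G : SimpleGraph (Fin N)) : ℕ → ℕ → Fin N → Fin N → Bool → Prop
  | base {a b : Fin N} : a < b → G.Adj a b → Zag G 1 1 a b true
  | stepL {s t : ℕ} {a b c : Fin N} : Zag G s t a b true → a < c → c < b → G.Adj c b →
      Zag G (s + 1) t c b false
  | stepR {s t : ℕ} {a b c : Fin N} : Zag G s t a b false → a < c → c < b → G.Adj a c →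
      Zag G s (t + 1) a c true

lemma zag_struct {N : ℕ} {G : SimpleGraph (Fin N)} {s t : ℕ} {a b : Fin N} {d : Bool}
    (h : Zag G s t a b d) :
    (d = true → s = t) ∧ (d = false → s = t + 1) ∧ 1 ≤ t ∧
    ∃ A B : ℕ → Fin N,
      (∀ i j, i < j → j < s → A i < A j) ∧
      (∀ i j, i < j → j < t → B j < B i) ∧
      (∀ i j, i < s → j < t → A i < B j) ∧
      (∀ i, i < t → G.Adj (A i) (B i)) ∧
      (∀ i, i + 1 < s → G.Adj (B i) (A (i + 1))) ∧
      A (s - 1) = a ∧ B (t - 1) = b := by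
  induction h with
  | @base a b hab hadj =>
      refine ⟨fun _ => rfl, fun h => by simp at h, le_refl 1,
        fun _ => a, fun _ => b, ?_, ?_, ?_, ?_, ?_, rfl, rfl⟩
      · intro i j hij hj; omega
      · intro i j hij hj; omega
      · intro i j _ _; exact hab
      · intro i _; exact hadj
      · intro i hi; omega
  | @stepL s t a b c hz hac hcb hadj ih =>
      obtain ⟨hst, -, ht1, A, B, hA, hB, hAB, hadjAB, hadjBA, hAe, hBe⟩ := ih
      have hst' : s = t := hst rfl
      have hs1 : 1 ≤ s := by omega
      have hAle : ∀ i, i < s → A i ≤ a := by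
        intro i hi
        rcases eq_or_lt_of_le (by omega : i ≤ s - 1) with h | h
        · rw [h, hAe]
        · exact le_of_lt (hAe ▸ hA i (s - 1) h (by omega))
      have hBge : ∀ j, j < t → b ≤ B j := by
        intro j hj
        rcases eq_or_lt_of_le (by omega : j ≤ t - 1) with h | h
        · rw [h, hBe]
        · exact le_of_lt (hBe ▸ hB j (t - 1) h (by omega))
      refine ⟨fun h => by simp at h, fun _ => by omega, ht1,
        (fun i => if i < s then A i else c), B, ?_, hB, ?_, ?_, ?_, ?_, hBe⟩
      · intro i j hij hj
        dsimp only
        by_cases hjs : j < s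
        · rw [if_pos (by omega), if_pos hjs]; exact hA i j hij hjs
        · rw [if_pos (by omega), if_neg hjs]
          exact lt_of_le_of_lt (hAle i (by omega)) hac
      · intro i j hi hj
        dsimp only
        by_cases his : i < s
        · rw [if_pos his]; exact hAB i j his hj
        · rw [if_neg his]; exact lt_of_lt_of_le hcb (hBge j hj)
      · intro i hi
        dsimp only
        rw [if_pos (by omega)]; exact hadjAB i hi
      · intro i hi
        dsimp only
        by_cases h : i + 1 < s
        · rw [if_pos h]; exact hadjBA i h
        · rw [if_neg h]
          have : i = t - 1 := by omega
          rw [this, hBe]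
          exact hadj.symm
      · dsimp only
        rw [if_neg (by omega)]
  | @stepR s t a b c hz hac hcb hadj ih =>
      obtain ⟨-, hst, ht1, A, B, hA, hB, hAB, hadjAB, hadjBA, hAe, hBe⟩ := ih
      have hst' : s = t + 1 := hst rfl
      have hAle : ∀ i, i < s → A i ≤ a := by
        intro i hi
        rcases eq_or_lt_of_le (by omega : i ≤ s - 1) with h | h
        · rw [h, hAe]
        · exact le_of_lt (hAe ▸ hA i (s - 1) h (by omega))
      have hBge : ∀ j, j < t → b ≤ B j := by
        intro j hj
        rcases eq_or_lt_of_le (by omega : j ≤ t - 1) with h | h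
        · rw [h, hBe]
        · exact le_of_lt (hBe ▸ hB j (t - 1) h (by omega))
      refine ⟨fun _ => by omega, fun h => by simp at h, by omega,
        A, (fun j => if j < t then B j else c), hA, ?_, ?_, ?_, ?_, hAe, ?_⟩
      · intro i j hij hj
        dsimp only
        by_cases hjt : j < t
        · rw [if_pos hjt, if_pos (show i < t by omega)]; exact hB i j hij hjt
        · rw [if_neg hjt, if_pos (show i < t by omega)]
          exact lt_of_lt_of_le hcb (hBge i (by omega))
      · intro i j hi hj
        dsimp only
        by_cases hjt : j < t
        · rw [if_pos hjt]; exact hAB i j hi hjt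
        · rw [if_neg hjt]; exact lt_of_le_of_lt (hAle i hi) hac
      · intro i hi
        dsimp only
        by_cases hit : i < t
        · rw [if_pos hit]; exact hadjAB i hit
        · rw [if_neg hit]
          have : i = t := by omega
          have hAt : A i = a := by rw [this, show t = s - 1 from by omega, hAe]
          rw [hAt]; exact hadj
      · intro i hi
        dsimp only
        rw [if_pos (show i < t by omega)]
        exact hadjBA i hi
      · dsimp only
        rw [if_neg (by omega)]

lemma zag_prefix {N : ℕ} {G : SimpleGraph (Fin N)} {s t : ℕ} {a b : Fin N} {d : Bool}
    (h : Zag G s t a b d) :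
    ∀ m, 2 ≤ m → m ≤ s + t →
      ∃ (s' t' : ℕ) (a' b' : Fin N) (d' : Bool), s' + t' = m ∧ Zag G s' t' a' b' d' := by
  induction h with
  | @base a b hab hadj =>
      intro m h2 hm
      exact ⟨1, 1, a, b, true, by omega, .base hab hadj⟩
  | @stepL s t a b c hz h1 h2 h3 ih =>
      intro m hm2 hm
      rcases le_or_gt m (s + t) with h | h
      · exact ih m hm2 h
      · exact ⟨s + 1, t, c, b, false, by omega, .stepL hz h1 h2 h3⟩
  | @stepR s t a b c hz h1 h2 h3 ih =>
      intro m hm2 hm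
      rcases le_or_gt m (s + t) with h | h
      · exact ih m hm2 h
      · exact ⟨s, t + 1, a, c, true, by omega, .stepR hz h1 h2 h3⟩

lemma zag_embed {N n : ℕ} {G : SimpleGraph (Fin N)} {s t : ℕ} {a b : Fin N} {d : Bool}
    (h : Zag G s t a b d) (hsum : s + t = n) : IsOrderedSubgraph (altPath n) G := by
  obtain ⟨hT, hF, ht1, A, B, hA, hB, hAB, hadjAB, hadjBA, -, -⟩ := zag_struct h
  have hs : s = t ∨ s = t + 1 := by
    cases d
    · right; exact hF rfl
    · left; exact hT rfl
  refine ⟨fun i => if (i : ℕ) < s then A i else B (n - 1 - i), ?_, ?_⟩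
  · intro i j hij
    have hij' : (i : ℕ) < j := hij
    have hi' : (i : ℕ) < n := i.isLt
    have hj' : (j : ℕ) < n := j.isLt
    dsimp only
    by_cases hi : (i : ℕ) < s <;> by_cases hj : (j : ℕ) < s
    · rw [if_pos hi, if_pos hj]; exact hA _ _ hij' hj
    · rw [if_pos hi, if_neg hj]; exact hAB _ _ hi (by omega)
    · omega
    · rw [if_neg hi, if_neg hj]
      exact hB (n - 1 - j) (n - 1 - i) (by omega) (by omega)
  · have key : ∀ (m : ℕ), m + 1 < n → ∀ u v : Fin n,
        (u : ℕ) = altPos n m → (v : ℕ) = altPos n (m + 1) →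
        G.Adj (if (u : ℕ) < s then A u else B (n - 1 - u))
          (if (v : ℕ) < s then A v else B (n - 1 - v)) := by
      intro m hm u v hu hv
      rcases Nat.mod_two_eq_zero_or_one m with hm2 | hm2
      · have hm2' : (m + 1) % 2 = 1 := by omega
        rw [altPos, if_pos hm2] at hu
        rw [altPos, if_neg (by omega)] at hv
        have hus : (u : ℕ) < s := by omega
        have hvs : ¬ (v : ℕ) < s := by omega
        rw [if_pos hus, if_neg hvs]
        have e1 : n - 1 - (v : ℕ) = m / 2 := by omega
        rw [hu, e1]
        exact hadjAB (m / 2) (by omega)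
      · have hm2' : (m + 1) % 2 = 0 := by omega
        rw [altPos, if_neg (by omega)] at hu
        rw [altPos, if_pos hm2'] at hv
        have hus : ¬ (u : ℕ) < s := by omega
        have hvs : (v : ℕ) < s := by omega
        rw [if_neg hus, if_pos hvs]
        have e1 : n - 1 - (u : ℕ) = (m + 1) / 2 - 1 := by omega
        rw [e1, hv]
        have := hadjBA ((m + 1) / 2 - 1) (by omega)
        rwa [show (m + 1) / 2 - 1 + 1 = (m + 1) / 2 from by omega] at this
    intro u v huv
    rw [altPath, SimpleGraph.fromRel_adj] at huv
    obtain ⟨hne, hrel | hrel⟩ := huv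
    · obtain ⟨m, hm, hu, hv⟩ := hrel
      exact key m hm u v hu hv
    · obtain ⟨m, hm, hv, hu⟩ := hrel
      exact (key m hm v u hv hu).symm

end AltProof

theorem stmt0 (ε : ℝ) (hε : 0 < ε) (n N : ℕ) (hn : 0 < n)
    (hN : (n : ℝ) / ε ≤ N) (G : SimpleGraph (Fin N)) [DecidableRel G.Adj]
    (hE : ε * N ^ 2 ≤ G.edgeFinset.card) :
    IsOrderedSubgraph (altPath n) G := by
  classical
  have hn' : (0 : ℝ) < n := by exact_mod_cast hn
  have hNpos : 0 < N := by
    rcases Nat.eq_zero_or_pos N with h | h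
    · exfalso
      rw [h] at hN
      have := div_pos hn' hε
      simp at hN
      linarith
    · exact h
  by_cases hn1 : n = 1
  · subst hn1
    refine ⟨fun _ => ⟨0, hNpos⟩, ?_, ?_⟩
    · intro i j hij
      have hi := i.isLt; have hj := j.isLt
      rw [Fin.lt_def] at hij
      omega
    · intro u v huv
      have : u = v := Subsingleton.elim u v
      rw [this] at huv
      exact absurd huv ((altPath 1).irrefl)
  have hn2 : 2 ≤ n := by omega
  by_contra hns
  have hno : ∀ (s t : ℕ) (a b : Fin N) (d : Bool), AltProof.Zag G s t a b d → s + t < n := by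
    intro s t a b d hz
    by_contra hge
    push_neg at hge
    obtain ⟨s', t', a', b', d', hsum, hz'⟩ := AltProof.zag_prefix hz n hn2 hge
    exact hns (AltProof.zag_embed hz' hsum)
  set P : Finset (Fin N × Fin N) :=
    Finset.univ.filter (fun p => p.1 < p.2 ∧ G.Adj p.1 p.2) with hPdef
  have hmemP : ∀ p : Fin N × Fin N, p ∈ P ↔ p.1 < p.2 ∧ G.Adj p.1 p.2 := by
    intro p; simp [hPdef]
  -- the edge count is at most the number of ordered adjacent pairs
  have hedge : G.edgeFinset.card ≤ P.card := by
    apply Finset.card_le_card_of_surjOn (fun p => s(p.1, p.2))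
    intro e he
    rw [Finset.mem_coe, SimpleGraph.mem_edgeFinset] at he
    induction e using Sym2.ind with
    | _ u v =>
      rw [SimpleGraph.mem_edgeSet] at he
      rcases lt_trichotomy u v with h | h | h
      · exact ⟨(u, v), by rw [Finset.mem_coe, hmemP]; exact ⟨h, he⟩, rfl⟩
      · exact absurd h he.ne
      · exact ⟨(v, u), by rw [Finset.mem_coe, hmemP]; exact ⟨h, he.symm⟩, Sym2.eq_swap⟩
  set Q : Fin N → Fin N → ℕ → Prop :=
    fun a b k => ∃ s t, s + t = k ∧ AltProof.Zag G s t a b true with hQdef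
  set r : Fin N → Fin N → ℕ := fun a b => Nat.findGreatest (Q a b) (n - 1) with hrdef
  have hrfacts : ∀ a b : Fin N, a < b → G.Adj a b →
      2 ≤ r a b ∧ Q a b (r a b) ∧ r a b ≤ n - 1 ∧ r a b % 2 = 0 := by
    intro a b hab hadj
    have hbase : Q a b 2 := ⟨1, 1, rfl, .base hab hadj⟩
    have h3 : 2 < n := hno 1 1 a b true (.base hab hadj)
    have h2 : 2 ≤ r a b := Nat.le_findGreatest (by omega) hbase
    have hspec : Q a b (r a b) := Nat.findGreatest_spec (P := Q a b) (by omega : 2 ≤ n - 1) hbase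
    obtain ⟨s, t, hsum, hz⟩ := hspec
    have hst : s = t := (AltProof.zag_struct hz).1 rfl
    exact ⟨h2, ⟨s, t, hsum, hz⟩, Nat.findGreatest_le _, by omega⟩
  set isMin : Fin N × Fin N → Prop :=
    fun p => ∀ a' : Fin N, a' < p.1 → G.Adj a' p.2 → r a' p.2 ≠ r p.1 p.2 with hisMindef
  set φ : Fin N × Fin N → Fin N × Bool × ℕ :=
    fun p => if isMin p then (p.2, true, r p.1 p.2) else (p.1, false, r p.1 p.2) with hφdef
  -- key extension fact
  have hkey : ∀ a b1 b2 : Fin N, (a, b1) ∈ P → (a, b2) ∈ P → b1 < b2 →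
      ¬ isMin (a, b2) → r a b2 = r a b1 → False := by
    intro a b1 b2 hp1 hp2 hb hmin heq
    rw [hmemP] at hp1 hp2
    simp only [hisMindef] at hmin
    push_neg at hmin
    obtain ⟨a', ha', hadj', heq'⟩ := hmin
    have ha'b2 : a' < b2 := lt_trans ha' hp2.1
    have h3 : 2 < n := hno 1 1 a' b2 true (.base ha'b2 hadj')
    have hspec : Q a' b2 (r a' b2) :=
      Nat.findGreatest_spec (P := Q a' b2) (by omega : 2 ≤ n - 1) ⟨1, 1, rfl, .base ha'b2 hadj'⟩
    obtain ⟨s0, t0, hsum0, hz0⟩ := hspec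
    have hz1 : AltProof.Zag G (s0 + 1) t0 a b2 false := .stepL hz0 ha' hp2.1 hp2.2
    have hz2 : AltProof.Zag G (s0 + 1) (t0 + 1) a b1 true := .stepR hz1 hp1.1 hb hp1.2
    have hlt : (s0 + 1) + (t0 + 1) < n := hno _ _ _ _ _ hz2
    have hge : (s0 + 1) + (t0 + 1) ≤ r a b1 :=
      Nat.le_findGreatest (by omega) ⟨s0 + 1, t0 + 1, rfl, hz2⟩
    omega
  have hinj : Set.InjOn φ ↑P := by
    rintro ⟨p1, p2⟩ hp ⟨q1, q2⟩ hq heq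
    rw [Finset.mem_coe, hmemP] at hp hq
    by_cases h1 : isMin (p1, p2) <;> by_cases h2 : isMin (q1, q2)
    · simp only [hφdef, if_pos h1, if_pos h2, Prod.mk.injEq] at heq
      obtain ⟨e1, -, e3⟩ := heq
      subst e1
      simp only [hisMindef] at h1 h2
      rcases lt_trichotomy p1 q1 with h | h | h
      · exact absurd e3 (h2 p1 h hp.2)
      · rw [h]
      · exact absurd e3.symm (h1 q1 h hq.2)
    · simp only [hφdef, if_pos h1, if_neg h2, Prod.mk.injEq] at heq
      exact absurd heq.2.1 (by simp)
    · simp only [hφdef, if_neg h1, if_pos h2, Prod.mk.injEq] at heq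
      exact absurd heq.2.1 (by simp)
    · simp only [hφdef, if_neg h1, if_neg h2, Prod.mk.injEq] at heq
      obtain ⟨e1, -, e3⟩ := heq
      subst e1
      rcases lt_trichotomy p2 q2 with h | h | h
      · exact (hkey p1 p2 q2 (by rw [hmemP]; exact hp) (by rw [hmemP]; exact hq) h h2
          e3.symm).elim
      · rw [h]
      · exact (hkey p1 q2 p2 (by rw [hmemP]; exact hq) (by rw [hmemP]; exact hp) h h1
          e3).elim
  set K : Finset ℕ := (Finset.range n).filter (fun k => k % 2 = 0 ∧ 2 ≤ k) with hKdef
  have himg : ∀ p ∈ P, φ p ∈ (Finset.univ ×ˢ Finset.univ ×ˢ K : Finset (Fin N × Bool × ℕ)) := by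
    intro p hp
    rw [hmemP] at hp
    obtain ⟨h2, -, hle, hev⟩ := hrfacts p.1 p.2 hp.1 hp.2
    have hmemK : r p.1 p.2 ∈ K := by
      rw [hKdef, Finset.mem_filter, Finset.mem_range]
      exact ⟨by omega, hev, h2⟩
    simp only [hφdef]
    by_cases h : isMin p
    · rw [if_pos h]; simp [Finset.mem_product, hmemK]
    · rw [if_neg h]; simp [Finset.mem_product, hmemK]
  have hKcard : K.card ≤ (n - 1) / 2 := by
    have h1 : K.card ≤ (Finset.Icc 1 ((n - 1) / 2)).card := by
      apply Finset.card_le_card_of_injOn (fun k => k / 2)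
      · intro k hk
        rw [Finset.mem_coe, hKdef, Finset.mem_filter, Finset.mem_range] at hk
        rw [Finset.mem_coe, Finset.mem_Icc]
        dsimp only
        omega
      · intro k hk l hl hkl
        rw [Finset.mem_coe, hKdef, Finset.mem_filter, Finset.mem_range] at hk hl
        dsimp only at hkl
        omega
    rw [Nat.card_Icc] at h1
    omega
  have hcount : P.card ≤ N * (n - 1) := by
    have h1 := Finset.card_le_card_of_injOn φ himg hinj
    rw [Finset.card_product, Finset.card_product, Finset.card_univ, Finset.card_univ,
      Fintype.card_fin, Fintype.card_bool] at h1
    calc P.card ≤ N * (2 * K.card) := h1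
      _ ≤ N * (2 * ((n - 1) / 2)) := by
          exact Nat.mul_le_mul_left _ (Nat.mul_le_mul_left _ hKcard)
      _ ≤ N * (n - 1) := Nat.mul_le_mul_left _ (by omega)
  -- final contradiction
  have hreal : (n * N : ℝ) ≤ (G.edgeFinset.card : ℝ) := by
    have h1 : (n : ℝ) ≤ ε * N := by
      rw [div_le_iff₀ hε] at hN
      linarith
    have h2 : (n : ℝ) * N ≤ ε * N * N :=
      mul_le_mul_of_nonneg_right h1 (by positivity)
    calc (n : ℝ) * N ≤ ε * N * N := h2
      _ = ε * N ^ 2 := by ring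
      _ ≤ _ := hE
  have hnat : n * N ≤ G.edgeFinset.card := by exact_mod_cast hreal
  have hfin : n * N ≤ N * (n - 1) := le_trans hnat (le_trans hedge hcount)
  rw [mul_comm] at hfin
  have := Nat.le_of_mul_le_mul_left hfin hNpos
  omega
end

section
/- Let ε > 0 and let n be a positive integer. Every ordered graph on N ≥ 2n/ε vertices with at least εN² edges contains the ordered matching M_{2n} as an ordered subgraph, where M_{2n} has vertices 1 < 2 < … < 2n and edges {i, 2n+1−i} for i = 1,…,n (the 'nested' matching). -/
/-- The nested ordered matching on `2*n` vertices: edges `{i, 2n+1-i}` (1-indexed),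
i.e. `a + b = 2n - 1` in 0-indexed form. -/
def nestedMatching (n : ℕ) : SimpleGraph (Fin (2 * n)) :=
  SimpleGraph.fromRel (fun a b => a.val + b.val = 2 * n - 1)

theorem stmt1 (ε : ℝ) (hε : 0 < ε) (n N : ℕ) (hn : 0 < n)
    (hN : 2 * (n : ℝ) / ε ≤ N) (G : SimpleGraph (Fin N)) [DecidableRel G.Adj]
    (hE : ε * N ^ 2 ≤ G.edgeFinset.card) :
    IsOrderedSubgraph (nestedMatching n) G := by
  classical
  have hNpos : (0:ℝ) < (N:ℝ) := lt_of_lt_of_le (by positivity) hN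
  have hN0 : 0 < N := by exact_mod_cast hNpos
  set P : Finset (Fin N × Fin N) :=
    Finset.univ.filter (fun p => G.Adj p.1 p.2 ∧ p.1 < p.2) with hPdef
  -- edge count vs ordered pairs
  have hPcard : G.edgeFinset.card ≤ P.card := by
    apply Finset.card_le_card_of_surjOn (fun p : Fin N × Fin N => s(p.1, p.2))
    intro e he
    revert he
    induction e using Sym2.ind with
    | _ a b =>
      intro he
      have hadj : G.Adj a b := by simpa using he
      rcases lt_or_gt_of_ne hadj.ne with h | h
      · exact ⟨(a, b), by simp [hPdef, hadj, h], rfl⟩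
      · exact ⟨(b, a), by simp [hPdef, hadj.symm, h], Sym2.eq_swap⟩
  -- 2nN ≤ |P|
  have h2n : (2*(n:ℝ)) ≤ ε * N := by
    rw [div_le_iff₀ hε] at hN
    linarith
  have hm : 2*n*N ≤ P.card := by
    have hR : ((2*n*N : ℕ) : ℝ) ≤ (P.card : ℝ) := by
      push_cast
      have h2 : (G.edgeFinset.card : ℝ) ≤ P.card := by exact_mod_cast hPcard
      nlinarith [hE]
    exact_mod_cast hR
  -- pigeonhole on endpoint sums
  have hmaps : ∀ p ∈ P, p.1.val + p.2.val ∈ Finset.range (2*N) := by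
    intro p _
    have := p.1.isLt; have := p.2.isLt
    simp only [Finset.mem_range]
    omega
  have hlt : (Finset.range (2*N)).card * (n-1) < P.card := by
    rw [Finset.card_range]
    have hnn : 2*N*(n-1) < 2*n*N := by
      obtain ⟨k, rfl⟩ : ∃ k, n = k+1 := ⟨n-1, (Nat.succ_pred_eq_of_pos hn).symm⟩
      simp only [Nat.add_sub_cancel]
      have he : 2*(k+1)*N = 2*N*k + 2*N := by ring
      omega
    omega
  obtain ⟨s₀, -, hs₀⟩ := Finset.exists_lt_card_fiber_of_mul_lt_card_of_maps_to hmaps hlt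
  set Q := P.filter (fun p => p.1.val + p.2.val = s₀) with hQdef
  have hQn : n ≤ Q.card := by omega
  -- left endpoints
  have hinj : Set.InjOn (fun p : Fin N × Fin N => p.1) ↑Q := by
    intro p hp q hq h
    simp only [hQdef, Finset.coe_filter, Set.mem_setOf_eq] at hp hq
    have h1 : p.1.val = q.1.val := congrArg Fin.val h
    have h2 : p.2 = q.2 := by
      apply Fin.ext
      omega
    exact Prod.ext h h2
  set A := Q.image (fun p => p.1) with hAdef
  have hAcard : n ≤ A.card := by
    rw [hAdef, Finset.card_image_of_injOn hinj]; exact hQn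
  obtain ⟨A', hA'sub, hA'card⟩ := Finset.exists_subset_card_eq hAcard
  set a : Fin n → Fin N := ⇑(A'.orderEmbOfFin hA'card) with hadef
  have ha : StrictMono a := (A'.orderEmbOfFin hA'card).strictMono
  -- partners
  have hex : ∀ i : Fin n, ∃ y : Fin N, G.Adj (a i) y ∧ a i < y ∧ (a i).val + y.val = s₀ := by
    intro i
    have hmem : a i ∈ A := hA'sub (A'.orderEmbOfFin_mem hA'card i)
    rw [hAdef, Finset.mem_image] at hmem
    obtain ⟨p, hp, hpe⟩ := hmem
    rw [hQdef, Finset.mem_filter, hPdef, Finset.mem_filter] at hp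
    exact ⟨p.2, by rw [← hpe]; exact hp.1.2.1, by rw [← hpe]; exact hp.1.2.2,
      by rw [← hpe]; exact hp.2⟩
  choose b hb1 hb2 hb3 using hex
  have hbanti : ∀ i j : Fin n, i < j → b j < b i := by
    intro i j hij
    have h1 := hb3 i; have h2 := hb3 j
    have h3 : a i < a j := ha hij
    rw [Fin.lt_def] at h3 ⊢
    have h4 := hb2 i
    rw [Fin.lt_def] at h4
    omega
  have hab : ∀ p q : Fin n, a p < b q := by
    intro p q
    rcases le_or_gt p q with h | h
    · exact lt_of_le_of_lt (ha.monotone h) (hb2 q)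
    · exact lt_trans (hb2 p) (hbanti q p h)
  -- the embedding
  refine ⟨fun i => if h : i.val < n then a ⟨i.val, h⟩
      else b ⟨2*n-1-i.val, by have := i.isLt; omega⟩, ?_, ?_⟩
  · intro i j hij
    have hi2 := i.isLt; have hj2 := j.isLt
    rw [Fin.lt_def] at hij
    by_cases hi : i.val < n
    · by_cases hj : j.val < n
      · simp only [dif_pos hi, dif_pos hj]
        exact ha (Fin.mk_lt_mk.mpr hij)
      · simp only [dif_pos hi, dif_neg hj]
        exact hab _ _
    · by_cases hj : j.val < n
      · omega
      · simp only [dif_neg hi, dif_neg hj]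
        exact hbanti _ _ (Fin.mk_lt_mk.mpr (by omega))
  · intro u v huv
    rw [nestedMatching, SimpleGraph.fromRel_adj] at huv
    obtain ⟨hne, hsum⟩ := huv
    have hu2 := u.isLt; have hv2 := v.isLt
    have hsum' : u.val + v.val = 2*n-1 := by omega
    rcases lt_or_ge u.val n with hu | hu
    · have hv : ¬ v.val < n := by omega
      simp only [dif_pos hu, dif_neg hv]
      have hidx : (⟨2*n-1-v.val, by omega⟩ : Fin n) = ⟨u.val, hu⟩ := by
        apply Fin.ext; simp; omega
      rw [hidx]
      exact hb1 _
    · have hv : v.val < n := by omega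
      have hu' : ¬ u.val < n := by omega
      simp only [dif_neg hu', dif_pos hv]
      have hidx : (⟨2*n-1-u.val, by omega⟩ : Fin n) = ⟨v.val, hv⟩ := by
        apply Fin.ext; simp; omega
      rw [hidx]
      exact (hb1 _).symm
end

section
/- For every even n ≥ 2, the ordered Ramsey number of the nested ordered matching M_n (with vertex set [n] and edges {i, n+1−i} for i = 1,…,n/2) is at most 2n − 2. That is, every 2-coloring of the edges of the ordered complete graph on 2n−2 vertices contains a monochromatic order-preserving copy of M_n. -/
/-- The nested ordered matching on `n` vertices (`n` even): edges `{i, n+1-i}` (1-indexed),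
i.e. `a + b = n - 1` in 0-indexed form. -/
def nestedM (n : ℕ) : SimpleGraph (Fin n) :=
  SimpleGraph.fromRel (fun a b => a.val + b.val = n - 1)

theorem stmt2 (n : ℕ) (hn : 2 ≤ n) (he : Even n)
    (c : Sym2 (Fin (2 * n - 2)) → Bool) :
    ∃ f : Fin n → Fin (2 * n - 2), StrictMono f ∧ ∃ col : Bool,
      ∀ u v, (nestedM n).Adj u v → c s(f u, f v) = col := by
  obtain ⟨k, hk⟩ := he
  have hk1 : 1 ≤ k := by omega
  have hb1 : ∀ i : Fin (n-1), (i.val) < 2*n-2 := fun i => by have := i.isLt; omega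
  have hb2 : ∀ i : Fin (n-1), 2*n-3-i.val < 2*n-2 := fun i => by omega
  set d : Fin (n-1) → Bool := fun i => c s(⟨i.val, hb1 i⟩, ⟨2*n-3-i.val, hb2 i⟩) with hd
  obtain ⟨col, s, hcard, hmem⟩ :
      ∃ (col : Bool) (s : Finset (Fin (n-1))), k ≤ s.card ∧ ∀ i ∈ s, d i = col := by
    have hsum := Finset.card_filter_add_card_filter_not
      (s := (Finset.univ : Finset (Fin (n-1)))) (p := fun i => d i = true)
    have hcu : (Finset.univ : Finset (Fin (n-1))).card = n - 1 := by
      simp [Fintype.card_fin]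
    by_cases h : k ≤ (Finset.univ.filter (fun i => d i = true)).card
    · exact ⟨true, _, h, fun i hi => (Finset.mem_filter.mp hi).2⟩
    · refine ⟨false, Finset.univ.filter (fun i => ¬ d i = true), ?_,
        fun i hi => by simpa using (Finset.mem_filter.mp hi).2⟩
      omega
  set e := s.orderEmbOfCardLe hcard with hee
  have hecol : ∀ j : Fin k, d (e j) = col :=
    fun j => hmem _ (Finset.orderEmbOfCardLe_mem s hcard j)
  -- nat-valued version of e
  set ee : ℕ → ℕ := fun m => if h : m < k then (e ⟨m, h⟩).val else 0 with heedef
  have hee_lt : ∀ m, ee m < n - 1 := by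
    intro m
    simp only [heedef]
    split
    · exact (e _).isLt
    · omega
  have hee_mono : ∀ m1 m2, m1 < m2 → m2 < k → ee m1 < ee m2 := by
    intro m1 m2 h12 h2
    simp only [heedef, dif_pos (lt_trans h12 h2), dif_pos h2]
    exact e.strictMono (by exact Fin.mk_lt_mk.mpr h12)
  have hfb : ∀ m : ℕ, m < n - 1 → m < 2*n-2 := fun m h => by omega
  have hfb2 : ∀ m : ℕ, 2*n-3-m < 2*n-2 := fun m => by omega
  set f : Fin n → Fin (2*n-2) := fun u =>
    if u.val < k then ⟨ee u.val, hfb _ (hee_lt _)⟩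
    else ⟨2*n-3 - ee (n-1-u.val), hfb2 _⟩ with hf
  -- key: color of the edge through index m < k
  have hkey : ∀ (m : ℕ) (hm : m < k),
      c s(⟨ee m, hfb _ (hee_lt _)⟩, ⟨2*n-3 - ee m, hfb2 _⟩) = col := by
    intro m hm
    have := hecol ⟨m, hm⟩
    simp only [hd] at this
    have h1 : ee m = (e ⟨m, hm⟩).val := by simp [heedef, dif_pos hm]
    have ha : (⟨ee m, hfb _ (hee_lt _)⟩ : Fin (2*n-2)) = ⟨(e ⟨m, hm⟩).val, hb1 _⟩ :=
      Fin.ext h1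
    have hb : (⟨2*n-3 - ee m, hfb2 _⟩ : Fin (2*n-2)) = ⟨2*n-3 - (e ⟨m, hm⟩).val, hb2 _⟩ :=
      Fin.ext (by simp only [h1])
    rw [ha, hb]
    exact this
  refine ⟨f, ?_, col, ?_⟩
  · intro u v huv
    have huv' : u.val < v.val := huv
    have hu := u.isLt; have hv := v.isLt
    simp only [hf]
    rcases lt_or_ge u.val k with h1 | h1 <;> rcases lt_or_ge v.val k with h2 | h2
    · rw [if_pos h1, if_pos h2]
      exact Fin.mk_lt_mk.mpr (hee_mono _ _ huv' h2)
    · rw [if_pos h1, if_neg (by omega)]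
      have := hee_lt u.val
      have := hee_lt (n-1-v.val)
      exact Fin.mk_lt_mk.mpr (by omega)
    · omega
    · rw [if_neg (by omega), if_neg (by omega)]
      have h3 : ee (n-1-v.val) < ee (n-1-u.val) :=
        hee_mono _ _ (by omega) (by omega)
      have := hee_lt (n-1-u.val)
      exact Fin.mk_lt_mk.mpr (by omega)
  · intro u v hadj
    rw [nestedM, SimpleGraph.fromRel_adj] at hadj
    obtain ⟨hne, hsum⟩ := hadj
    have hsum' : u.val + v.val = n - 1 := by omega
    have hu := u.isLt; have hv := v.isLt
    have hne' : u.val ≠ v.val := fun h => hne (Fin.ext h)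
    -- exactly one of u, v is < k
    rcases lt_or_ge u.val k with h1 | h1
    · have h2 : ¬ v.val < k := by omega
      have h3 : n - 1 - v.val = u.val := by omega
      have : f u = ⟨ee u.val, hfb _ (hee_lt _)⟩ := by simp [hf, if_pos h1]
      rw [this]
      have : f v = ⟨2*n-3 - ee u.val, hfb2 _⟩ := by
        simp only [hf, if_neg h2, h3]
      rw [this]
      exact hkey u.val h1
    · have h2 : v.val < k := by omega
      have h3 : n - 1 - u.val = v.val := by omega
      have hfv : f v = ⟨ee v.val, hfb _ (hee_lt _)⟩ := by simp [hf, if_pos h2]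
      have hfu : f u = ⟨2*n-3 - ee v.val, hfb2 _⟩ := by
        simp only [hf, if_neg (by omega : ¬ u.val < k), h3]
      rw [hfu, hfv, Sym2.eq_swap]
      exact hkey v.val h2
end

section
/- Let d, n, r, S be positive integers, let X₁,…,X_d ⊆ [n] and Y₁,…,Y_d ⊆ [2n]∖[n] be pairwise disjoint sets with |X₁| ≥ … ≥ |X_d|, |Y₁| ≥ … ≥ |Y_d| and |X_d||Y_d| ≥ S, and let T be a set of r pairs (X_i, Y_j) with 1 ≤ i, j ≤ d. If π is a uniformly random permutation of [n] and M(π) is the ordered matching with edges {i, n+π(i)}, then the probability that e_{M(π)}(X_i, Y_j) = 0 for every (X_i, Y_j) ∈ T is less than exp(−(S/n)·⌊(3d − √(9d² − 8r))/4⌋²). -/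
open Finset

open Classical in
lemma cnt_le (n c : ℕ) : ∀ (M : ℕ) (C : Fin M → Finset (Fin n)),
    (∀ s, c ≤ (C s).card) →
    (univ.filter (fun g : Fin M → Fin n =>
      Function.Injective g ∧ ∀ s, g s ∉ C s)).card ≤ (n - c)^M := by
  intro M
  induction M with
  | zero =>
    intro C hC
    refine le_trans (Finset.card_le_univ _) ?_
    simp
  | succ M ih =>
    intro C hC
    have hfib : ∀ v : Fin n,
        ((univ.filter (fun g : Fin (M+1) → Fin n =>
          Function.Injective g ∧ ∀ s, g s ∉ C s)).filter (fun g => g 0 = v)).card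
        ≤ if v ∈ C 0 then 0 else (n - c)^M := by
      intro v
      by_cases hv : v ∈ C 0
      · have hempty : ((univ.filter (fun g : Fin (M+1) → Fin n =>
            Function.Injective g ∧ ∀ s, g s ∉ C s)).filter (fun g => g 0 = v)) = ∅ := by
          apply Finset.filter_eq_empty_iff.mpr
          intro g hg hg0
          rcases Finset.mem_filter.mp hg with ⟨-, hinj, havoid⟩
          exact (hg0 ▸ havoid 0) hv
        simp [hempty, hv]
      · simp only [hv, if_false]
        have := ih (fun s => insert v (C s.succ)) (fun s => le_trans (hC s.succ) (Finset.card_le_card (Finset.subset_insert _ _)))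
        refine le_trans (Finset.card_le_card_of_injOn (fun g => fun s => g s.succ) ?_ ?_) this
        · intro g hg
          rcases Finset.mem_filter.mp (Finset.mem_filter.mp hg).1 with ⟨-, hinj, havoid⟩
          have hg0 : g 0 = v := (Finset.mem_filter.mp hg).2
          refine Finset.mem_filter.mpr ⟨Finset.mem_univ _, ?_, ?_⟩
          · intro s t hst
            exact Fin.succ_injective _ (hinj hst)
          · intro s
            simp only [Finset.mem_insert, not_or]
            refine ⟨?_, havoid s.succ⟩
            intro h
            exact (Fin.succ_ne_zero s) (hinj (h.trans hg0.symm))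
        · intro g hg g' hg' hgg
          have hg0 : g 0 = v := (Finset.mem_filter.mp hg).2
          have hg'0 : g' 0 = v := (Finset.mem_filter.mp hg').2
          funext s
          rcases Fin.eq_zero_or_eq_succ s with rfl | ⟨t, rfl⟩
          · rw [hg0, hg'0]
          · exact congrFun hgg t
    have hsum := Finset.card_eq_sum_card_fiberwise
      (f := fun g : Fin (M+1) → Fin n => g 0)
      (s := univ.filter (fun g : Fin (M+1) → Fin n =>
        Function.Injective g ∧ ∀ s, g s ∉ C s)) (t := univ) (fun x _ => Finset.mem_univ _)
    rw [hsum]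
    calc ∑ v ∈ univ, ((univ.filter (fun g : Fin (M+1) → Fin n =>
          Function.Injective g ∧ ∀ s, g s ∉ C s)).filter (fun g => g 0 = v)).card
        ≤ ∑ v ∈ univ, if v ∈ C 0 then 0 else (n - c)^M := Finset.sum_le_sum (fun v _ => hfib v)
      _ = (univ.filter (fun v => ¬ (v ∈ C 0))).card * (n - c)^M := by
          rw [Finset.sum_ite, Finset.sum_const, Finset.sum_const]
          simp
      _ ≤ (n - c) * (n - c)^M := by
          have hcc : (univ.filter (fun v => ¬ (v ∈ C 0))).card = n - (C 0).card := by
            rw [Finset.filter_not, Finset.card_sdiff_of_subset (Finset.filter_subset _ _)]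
            simp
          refine Nat.mul_le_mul ?_ le_rfl
          rw [hcc]
          exact Nat.sub_le_sub_left (hC 0) n
      _ = (n - c)^(M+1) := (pow_succ' _ _).symm

open Classical in
lemma fix_card (n : ℕ) (W : Finset (Fin n)) :
    (univ.filter (fun σ : Equiv.Perm (Fin n) => ∀ a ∈ W, σ a = a)).card
      ≤ (n - W.card).factorial := by
  classical
  have key : ∀ σ : Equiv.Perm (Fin n), (∀ a ∈ W, σ a = a) →
      ∀ x : Fin n, x ∉ W ↔ σ x ∉ W := by
    intro σ hσ x
    constructor
    · intro hx hσx
      have h1 : σ (σ x) = σ x := hσ _ hσx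
      have h2 : σ x = x := σ.injective h1
      rw [h2] at hσx
      exact hx hσx
    · intro hσx hx
      rw [hσ x hx] at hσx
      exact hσx hx
  have : (univ.filter (fun σ : Equiv.Perm (Fin n) => ∀ a ∈ W, σ a = a)).card
      ≤ (univ : Finset (Equiv.Perm {x : Fin n // x ∉ W})).card := by
    apply Finset.card_le_card_of_injOn
      (fun σ => if h : ∀ a ∈ W, σ a = a then σ.subtypePerm (fun x => (key σ h x).symm) else 1)
    · intro σ hσ; exact Finset.mem_univ _
    · intro σ hσ τ hτ hst
      have hσ' := (Finset.mem_filter.mp hσ).2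
      have hτ' := (Finset.mem_filter.mp hτ).2
      simp only [dif_pos hσ', dif_pos hτ'] at hst
      ext x
      by_cases hx : x ∈ W
      · rw [hσ' x hx, hτ' x hx]
      · have h3 := congrArg (fun (e : Equiv.Perm {x : Fin n // x ∉ W}) => e ⟨x, hx⟩) hst
        have h4 : σ x = τ x := congrArg Subtype.val h3
        exact congrArg Fin.val h4
  refine le_trans this ?_
  rw [Finset.card_univ, Fintype.card_perm]
  have : Fintype.card {x : Fin n // x ∉ W} = n - W.card := by
    rw [Fintype.card_subtype_compl]
    simp [Fintype.card_subtype]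
  rw [this]

open Classical in
lemma bad_le (n M c : ℕ) (w : Fin M → Fin n) (hw : Function.Injective w)
    (C : Fin M → Finset (Fin n)) (hC : ∀ s, c ≤ (C s).card) :
    (univ.filter (fun π : Equiv.Perm (Fin n) => ∀ s, π (w s) ∉ C s)).card
      ≤ (n - c)^M * (n - M).factorial := by
  classical
  set bad := univ.filter (fun π : Equiv.Perm (Fin n) => ∀ s, π (w s) ∉ C s) with hbad
  have himg : bad.image (fun π : Equiv.Perm (Fin n) => (fun s => π (w s) : Fin M → Fin n))
      ⊆ univ.filter (fun g : Fin M → Fin n => Function.Injective g ∧ ∀ s, g s ∉ C s) := by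
    intro g hg
    rcases Finset.mem_image.mp hg with ⟨π, hπ, rfl⟩
    have hπ' := (Finset.mem_filter.mp hπ).2
    exact Finset.mem_filter.mpr ⟨Finset.mem_univ _,
      fun s t hst => hw (π.injective hst), hπ'⟩
  have hfiber : ∀ g ∈ bad.image (fun π : Equiv.Perm (Fin n) => (fun s => π (w s) : Fin M → Fin n)),
      (bad.filter (fun π => (fun s => π (w s) : Fin M → Fin n) = g)).card ≤ (n - M).factorial := by
    intro g hg
    rcases Finset.mem_image.mp hg with ⟨π₀, hπ₀, hgeq⟩
    set W : Finset (Fin n) := univ.image w with hW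
    have hWcard : W.card = M := by
      rw [hW, Finset.card_image_of_injective _ hw, Finset.card_univ, Fintype.card_fin]
    have := fix_card n W
    rw [hWcard] at this
    refine le_trans (Finset.card_le_card_of_injOn (fun π => π₀⁻¹ * π) ?_ ?_) this
    · intro π hπ
      have hπeq : (fun s => π (w s) : Fin M → Fin n) = g := (Finset.mem_filter.mp hπ).2
      refine Finset.mem_filter.mpr ⟨Finset.mem_univ _, ?_⟩
      intro a ha
      rcases Finset.mem_image.mp ha with ⟨s, -, rfl⟩
      have h1 : π (w s) = g s := congrFun hπeq s
      have h2 : π₀ (w s) = g s := congrFun hgeq s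
      simp [Equiv.Perm.mul_apply, h1, ← h2]
    · intro π hπ τ hτ hst
      have := congrArg (fun σ => π₀ * σ) hst
      simpa [← mul_assoc] using this
  calc bad.card ≤ (n - M).factorial *
        (bad.image (fun π : Equiv.Perm (Fin n) => (fun s => π (w s) : Fin M → Fin n))).card :=
        Finset.card_le_mul_card_image _ _ hfiber
    _ ≤ (n - M).factorial * (n - c)^M := by
        refine Nat.mul_le_mul le_rfl ?_
        exact le_trans (Finset.card_le_card himg) (cnt_le n c M C hC)
    _ = (n - c)^M * (n - M).factorial := Nat.mul_comm _ _

lemma ratio_le (n c s : ℝ) (hn : 0 < n) (hs : 0 ≤ s) (hsc : s ≤ c) (hcn : c ≤ n)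
    (hsn : s < n) : (n - c)/(n - s) ≤ 1 - (c - s)/n := by
  rw [div_le_iff₀ (by linarith)]
  have h1 : (c-s)*(n-s)/n ≤ (c-s) := by
    rw [div_le_iff₀ hn]
    nlinarith
  have h2 : (1 - (c-s)/n) * (n-s) = (n-s) - (c-s)*(n-s)/n := by ring
  linarith

lemma one_sub_lt_exp (t n : ℝ) (hn : 0 < n) (ht : 0 < t) :
    1 - t/n < Real.exp (-(t/n)) := by
  have h := Real.add_one_lt_exp (x := -(t/n)) (by
    have : 0 < t/n := div_pos ht hn
    linarith)
  linarith

open Classical in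
lemma core (n d z S x y : ℕ) (hn : 0 < n) (hz : 1 ≤ z) (hx : 1 ≤ x) (hxy : x ≤ y)
    (hSxy : S ≤ x * y) (hzd : 2*z ≤ d)
    (A B : Fin d → Finset (Fin n))
    (hA : ∀ i, x ≤ (A i).card) (hB : ∀ j, y ≤ (B j).card)
    (hAdis : ∀ i j, i ≠ j → Disjoint (A i) (A j))
    (hBdis : ∀ i j, i ≠ j → Disjoint (B i) (B j))
    (T : Finset (Fin d × Fin d))
    (I : Finset (Fin d)) (hIz : z ≤ I.card)
    (hideg : ∀ i ∈ I, 2*z ≤ ((T.filter (fun p => p.1 = i)).card)) :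
    ((univ.filter (fun π : Equiv.Perm (Fin n) =>
        ∀ p ∈ T, ∀ a ∈ A p.1, π a ∉ B p.2)).card : ℝ) / (n.factorial : ℝ)
      < Real.exp (-(S:ℝ)/n * (z:ℝ)^2) := by
  classical
  -- choose I' ⊆ I of card z and enumeration e
  obtain ⟨I', hI'sub, hI'card⟩ := Finset.exists_subset_card_eq hIz
  set e : Fin z → Fin d := fun k => (I'.orderIsoOfFin hI'card k : Fin d) with he
  have heI : ∀ k, e k ∈ I' := fun k => (I'.orderIsoOfFin hI'card k).2
  have hei : Function.Injective e := fun k l h =>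
    (I'.orderIsoOfFin hI'card).injective (Subtype.ext h)
  -- column sets
  set colset : Fin z → Finset (Fin d) :=
    fun k => (T.filter (fun p => p.1 = e k)).image Prod.snd with hcolset
  have hcol : ∀ k, 2*z ≤ (colset k).card := by
    intro k
    have h1 : (colset k).card = (T.filter (fun p => p.1 = e k)).card := by
      apply Finset.card_image_of_injOn
      intro p hp q hq hpq
      exact Prod.ext (((Finset.mem_filter.mp hp).2).trans ((Finset.mem_filter.mp hq).2).symm) hpq
    rw [h1]
    exact hideg (e k) (hI'sub (heI k))
  -- big forbidden sets
  set BigB : Fin z → Finset (Fin n) := fun k => (colset k).biUnion B with hBigB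
  have hBig : ∀ k, 2*z*y ≤ (BigB k).card := by
    intro k
    have h1 : (BigB k).card = ∑ j ∈ colset k, (B j).card :=
      Finset.card_biUnion (fun j _ j' _ hne => hBdis j j' hne)
    rw [h1]
    calc 2*z*y ≤ (colset k).card * y := Nat.mul_le_mul_right y (hcol k)
      _ ≤ ∑ j ∈ colset k, (B j).card := by
          have := Finset.card_nsmul_le_sum (colset k) (fun j => (B j).card) y (fun j _ => hB j)
          simpa [smul_eq_mul] using this
  -- choose subsets of the A's of size exactly x
  have hch : ∀ k : Fin z, ∃ t, t ⊆ A (e k) ∧ t.card = x := by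
    intro k
    obtain ⟨t, ht1, ht2⟩ := Finset.exists_subset_card_eq (hA (e k))
    exact ⟨t, ht1, ht2⟩
  choose A' hA'sub hA'card using hch
  -- the index bijection and block enumeration
  set M := z*x with hM
  set q : Fin M ≃ Fin z × Fin x := finProdFinEquiv.symm with hq
  set w : Fin M → Fin n :=
    fun s => ((A' (q s).1).orderIsoOfFin (hA'card (q s).1) (q s).2 : Fin n) with hw
  have hwmem : ∀ s, w s ∈ A' (q s).1 :=
    fun s => ((A' (q s).1).orderIsoOfFin (hA'card (q s).1) (q s).2).2
  have hwinj : Function.Injective w := by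
    intro s t hst
    have hkeq : (q s).1 = (q t).1 := by
      by_contra hne
      have hd := hAdis (e (q s).1) (e (q t).1) (fun h => hne (hei h))
      have hd' : Disjoint (A' (q s).1) (A' (q t).1) :=
        hd.mono (hA'sub _) (hA'sub _)
      have hks : w s ∈ A' (q s).1 := hwmem s
      rw [hst] at hks
      exact (Finset.disjoint_left.mp hd') hks (hwmem t)
    have hst' : ((A' (q s).1).orderIsoOfFin (hA'card (q s).1) (q s).2 : Fin n)
        = ((A' (q t).1).orderIsoOfFin (hA'card (q t).1) (q t).2 : Fin n) := hst
    rw [← hkeq] at hst'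
    have h2 : (q s).2 = (q t).2 :=
      ((A' (q s).1).orderIsoOfFin (hA'card (q s).1)).injective (Subtype.ext hst')
    exact q.injective (Prod.ext hkeq h2)
  -- forbidden sets for each index
  set C : Fin M → Finset (Fin n) := fun s => BigB (q s).1 with hC
  have hCcard : ∀ s, 2*z*y ≤ (C s).card := fun s => hBig (q s).1
  -- the bad set is contained in the avoidance set
  set bad := univ.filter (fun π : Equiv.Perm (Fin n) =>
      ∀ p ∈ T, ∀ a ∈ A p.1, π a ∉ B p.2) with hbad
  have hsub : bad ⊆ univ.filter (fun π : Equiv.Perm (Fin n) => ∀ s, π (w s) ∉ C s) := by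
    intro π hπ
    have hπ' := (Finset.mem_filter.mp hπ).2
    refine Finset.mem_filter.mpr ⟨Finset.mem_univ _, ?_⟩
    intro s hmem
    rcases Finset.mem_biUnion.mp hmem with ⟨j, hj, hπwj⟩
    rcases Finset.mem_image.mp hj with ⟨p, hp, rfl⟩
    have hpT : p ∈ T := (Finset.mem_filter.mp hp).1
    have hp1 : p.1 = e (q s).1 := (Finset.mem_filter.mp hp).2
    have hwA : w s ∈ A p.1 := by
      rw [hp1]
      exact hA'sub _ (hwmem s)
    exact hπ' p hpT (w s) hwA hπwj
  have hcount : bad.card ≤ (n - 2*z*y)^M * (n - M).factorial :=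
    le_trans (Finset.card_le_card hsub) (bad_le n M (2*z*y) w hwinj C hCcard)
  -- size facts
  have hdxn : d * x ≤ n := by
    have h1 : ∑ i ∈ univ, (A i).card = (univ.biUnion A).card :=
      (Finset.card_biUnion (fun i _ j _ hne => hAdis i j hne)).symm
    have h2 : (univ.biUnion A).card ≤ n := by
      have := Finset.card_le_univ (univ.biUnion A)
      simpa using this
    have h3 : d * x ≤ ∑ i ∈ univ, (A i).card := by
      calc d * x = (univ : Finset (Fin d)).card * x := by simp
        _ ≤ ∑ i ∈ univ, (A i).card := by
            have := Finset.card_nsmul_le_sum (univ : Finset (Fin d))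
              (fun i => (A i).card) x (fun i _ => hA i)
            simpa [smul_eq_mul] using this
    omega
  have hM1 : 1 ≤ M := Nat.one_le_iff_ne_zero.mpr (by positivity)
  have hMzy : M ≤ z*y := Nat.mul_le_mul_left z hxy
  have h2Mn : 2*M ≤ n := by
    calc 2*M = 2*z*x := by rw [hM]; ring
      _ ≤ d*x := Nat.mul_le_mul_right x hzd
      _ ≤ n := hdxn
  have hMn : M ≤ n := by omega
  have hMc : M ≤ 2*z*y := by
    calc M ≤ z*y := hMzy
      _ ≤ 2*z*y := by nlinarith
  by_cases hcn : n ≤ 2*z*y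
  · -- the count is zero
    have hnc0 : n - 2*z*y = 0 := by omega
    have hzero : bad.card = 0 := by
      have h := hcount
      rw [hnc0, zero_pow (by omega : M ≠ 0), zero_mul] at h
      omega
    rw [hzero]
    simpa using Real.exp_pos _
  · push_neg at hcn
    -- factorial factorization
    have hfactn : n.factorial = (∏ s ∈ range M, (n - s)) * (n - M).factorial := by
      rw [← Nat.factorial_mul_descFactorial hMn, Nat.descFactorial_eq_prod_range, mul_comm]
    have hfact' : (n.factorial : ℝ)
        = (∏ s ∈ range M, ((n - s : ℕ) : ℝ)) * ((n - M).factorial : ℝ) := by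
      rw [← Nat.cast_prod, ← Nat.cast_mul, hfactn]
    have hfpos : (0:ℝ) < (n.factorial : ℝ) := by exact_mod_cast n.factorial_pos
    have hprodpos : ∀ s ∈ range M, (0:ℝ) < ((n - s : ℕ) : ℝ) := by
      intro s hs
      have hsM := Finset.mem_range.mp hs
      have : 0 < n - s := by omega
      exact_mod_cast this
    have hfacpos : (0:ℝ) < ((n - M).factorial : ℝ) := by
      exact_mod_cast Nat.factorial_pos _
    have step1 : ((bad.card : ℝ)) / (n.factorial : ℝ)
        ≤ (((n - 2*z*y)^M * (n - M).factorial : ℕ) : ℝ) / (n.factorial : ℝ) := by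
      gcongr
    have step2 : (((n - 2*z*y)^M * (n - M).factorial : ℕ) : ℝ) / (n.factorial : ℝ)
        = ∏ s ∈ range M, (((n - 2*z*y : ℕ)) : ℝ) / ((n - s : ℕ) : ℝ) := by
      rw [hfact', Nat.cast_mul, Nat.cast_pow]
      rw [mul_div_mul_right _ _ (ne_of_gt hfacpos)]
      rw [Finset.prod_div_distrib, Finset.prod_const, Finset.card_range]
    have step3 : ∏ s ∈ range M, (((n - 2*z*y : ℕ)) : ℝ) / ((n - s : ℕ) : ℝ)
        < ∏ s ∈ range M, Real.exp (-((((2*z*y - s : ℕ)) : ℝ) / n)) := by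
      apply Finset.prod_lt_prod_of_nonempty
      · intro s hs
        apply div_pos
        · have : 0 < n - 2*z*y := by omega
          exact_mod_cast this
        · exact hprodpos s hs
      · intro s hs
        have hsM := Finset.mem_range.mp hs
        have hsc : s < 2*z*y := by omega
        have hsn : s < n := by omega
        have hc1 : ((n - 2*z*y : ℕ) : ℝ) = (n:ℝ) - ((2*z*y : ℕ):ℝ) := by
          exact_mod_cast Nat.cast_sub (le_of_lt hcn)
        have hc2 : ((n - s : ℕ) : ℝ) = (n:ℝ) - (s:ℝ) := by
          exact_mod_cast Nat.cast_sub (by omega : s ≤ n)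
        have hc3 : ((2*z*y - s : ℕ) : ℝ) = ((2*z*y : ℕ):ℝ) - (s:ℝ) := by
          exact_mod_cast Nat.cast_sub (le_of_lt hsc)
        rw [hc1, hc2, hc3]
        have hnR : (0:ℝ) < n := by exact_mod_cast hn
        have hle := ratio_le (n:ℝ) ((2*z*y:ℕ):ℝ) (s:ℝ) hnR (by positivity)
          (by exact_mod_cast le_of_lt hsc) (by exact_mod_cast le_of_lt hcn)
          (by exact_mod_cast hsn)
        have hlt := one_sub_lt_exp (((2*z*y:ℕ):ℝ) - (s:ℝ)) (n:ℝ) hnR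
          (by
            have : (s:ℝ) < ((2*z*y:ℕ):ℝ) := by exact_mod_cast hsc
            linarith)
        calc ((n:ℝ) - ((2*z*y:ℕ):ℝ)) / ((n:ℝ) - (s:ℝ)) ≤ 1 - (((2*z*y:ℕ):ℝ) - (s:ℝ))/n := hle
          _ < Real.exp (-((((2*z*y:ℕ):ℝ) - (s:ℝ))/n)) := hlt
      · exact Finset.nonempty_range_iff.mpr (by omega)
    have step4 : ∏ s ∈ range M, Real.exp (-((((2*z*y - s : ℕ)) : ℝ) / n))
        ≤ Real.exp (-(S:ℝ)/n * (z:ℝ)^2) := by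
      rw [← Real.exp_sum]
      apply Real.exp_le_exp.mpr
      have hsumN : S * z^2 ≤ ∑ s ∈ range M, (2*z*y - s) := by
        have h1 : ∀ s ∈ range M, z*y ≤ 2*z*y - s := by
          intro s hs
          have hsM := Finset.mem_range.mp hs
          have hMzy' := hMzy
          have e : 2*z*y = 2*(z*y) := by ring
          rw [e]
          omega
        have h2 : M * (z*y) ≤ ∑ s ∈ range M, (2*z*y - s) := by
          have := Finset.card_nsmul_le_sum (range M) (fun s => 2*z*y - s) (z*y) h1
          simpa [smul_eq_mul, mul_comm] using this
        have h3 : S * z^2 ≤ M * (z*y) := by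
          have : M * (z*y) = (x*y) * z^2 := by rw [hM]; ring
          rw [this]
          exact Nat.mul_le_mul_right _ hSxy
        omega
      have hsum' : ((S * z^2 : ℕ):ℝ) ≤ ((∑ s ∈ range M, (2*z*y - s) : ℕ):ℝ) := by
        exact_mod_cast hsumN
      have hnR : (0:ℝ) < n := by exact_mod_cast hn
      have heq : ∑ s ∈ range M, -((((2*z*y - s : ℕ)) : ℝ) / n)
          = -(((∑ s ∈ range M, (2*z*y - s) : ℕ):ℝ))/n := by
        rw [Finset.sum_neg_distrib, ← Finset.sum_div, Nat.cast_sum, neg_div]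
      rw [heq]
      have : -(S:ℝ)/n * (z:ℝ)^2 = -(((S * z^2 : ℕ):ℝ))/n := by
        push_cast
        ring
      rw [this]
      rw [neg_div, neg_div]
      exact neg_le_neg ((div_le_div_iff_of_pos_right hnR).mpr hsum')
    calc ((bad.card : ℝ)) / (n.factorial : ℝ)
        ≤ (((n - 2*z*y)^M * (n - M).factorial : ℕ) : ℝ) / (n.factorial : ℝ) := step1
      _ = ∏ s ∈ range M, (((n - 2*z*y : ℕ)) : ℝ) / ((n - s : ℕ) : ℝ) := step2
      _ < ∏ s ∈ range M, Real.exp (-((((2*z*y - s : ℕ)) : ℝ) / n)) := step3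
      _ ≤ Real.exp (-(S:ℝ)/n * (z:ℝ)^2) := step4

open Classical in
lemma pigeon (d z r : ℕ) (T : Finset (Fin d × Fin d)) (hT : T.card = r)
    (hz : 1 ≤ z) (hzd : 2*z ≤ d) (hzr : 3*d*z ≤ r + 2*z^2) :
    z ≤ (univ.filter (fun i : Fin d =>
      2*z ≤ ((T.filter (fun p => p.1 = i)).card))).card := by
  classical
  set I := univ.filter (fun i : Fin d =>
      2*z ≤ ((T.filter (fun p => p.1 = i)).card)) with hI
  by_contra hcon
  push_neg at hcon
  -- deg sums to r
  have hsum : r = ∑ i ∈ univ, (T.filter (fun p => p.1 = i)).card := by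
    rw [← hT]
    exact Finset.card_eq_sum_card_fiberwise (fun p _ => Finset.mem_univ p.1)
  have hdegd : ∀ i : Fin d, (T.filter (fun p => p.1 = i)).card ≤ d := by
    intro i
    have : (T.filter (fun p => p.1 = i)).card ≤ (univ : Finset (Fin d)).card := by
      apply Finset.card_le_card_of_injOn (fun p => p.2) (fun p _ => Finset.mem_univ _)
      intro p hp q hq hpq
      have hp1 : p.1 = i := (Finset.mem_filter.mp hp).2
      have hq1 : q.1 = i := (Finset.mem_filter.mp hq).2
      exact Prod.ext (hp1.trans hq1.symm) hpq
    simpa using this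
  have hsplit : ∑ i ∈ univ, (T.filter (fun p => p.1 = i)).card
      ≤ I.card * d + (d - I.card) * (2*z - 1) := by
    rw [← Finset.sum_filter_add_sum_filter_not univ (fun i => i ∈ I)]
    have h1 : ∑ i ∈ univ.filter (fun i => i ∈ I), (T.filter (fun p => p.1 = i)).card
        ≤ I.card * d := by
      have : univ.filter (fun i => i ∈ I) = I := by
        ext i; simp [hI]
      rw [this]
      calc ∑ i ∈ I, (T.filter (fun p => p.1 = i)).card ≤ ∑ _i ∈ I, d :=
            Finset.sum_le_sum (fun i _ => hdegd i)
        _ = I.card * d := by rw [Finset.sum_const, smul_eq_mul]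
    have h2 : ∑ i ∈ univ.filter (fun i => ¬ i ∈ I), (T.filter (fun p => p.1 = i)).card
        ≤ (d - I.card) * (2*z - 1) := by
      have hc : (univ.filter (fun i => ¬ i ∈ I)).card = d - I.card := by
        rw [Finset.filter_not, Finset.card_sdiff_of_subset]
        · simp [hI]
        · intro i hi; exact Finset.mem_univ i
      calc ∑ i ∈ univ.filter (fun i => ¬ i ∈ I), (T.filter (fun p => p.1 = i)).card
          ≤ ∑ i ∈ univ.filter (fun i => ¬ i ∈ I), (2*z - 1) := by
            apply Finset.sum_le_sum
            intro i hi
            have hni := (Finset.mem_filter.mp hi).2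
            have : ¬ 2*z ≤ (T.filter (fun p => p.1 = i)).card := by
              intro hcontra
              exact hni (Finset.mem_filter.mpr ⟨Finset.mem_univ _, hcontra⟩)
            omega
        _ = (d - I.card) * (2*z - 1) := by rw [Finset.sum_const, smul_eq_mul, hc]
    omega
  have hIcard : I.card ≤ z - 1 := by omega
  have hIle : I.card ≤ d := by
    have := Finset.card_le_univ I
    simpa using this
  rw [← hsum] at hsplit
  -- r ≤ I.card * d + (d - I.card)(2z-1), I.card ≤ z-1, monotone in I.card since 2z-1 ≤ d
  have hmono : I.card * d + (d - I.card) * (2*z - 1) ≤ (z-1) * d + (d - (z-1)) * (2*z-1) := by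
    have h2z1 : 2*z - 1 ≤ d := by omega
    have hz1d : z - 1 ≤ d := by omega
    nlinarith [Nat.sub_add_cancel hIle, Nat.sub_add_cancel hz1d, hIcard,
      Nat.sub_le d (I.card), Nat.sub_le d (z-1)]
  have : r ≤ (z-1) * d + (d - (z-1)) * (2*z-1) := le_trans hsplit hmono
  -- contradiction with 3dz ≤ r + 2z²
  have hexp : (z-1) * d + (d - (z-1)) * (2*z-1) + 2*z^2 < 3*d*z := by
    obtain ⟨a, rfl⟩ : ∃ a, z = a + 1 := ⟨z - 1, by omega⟩
    obtain ⟨b, rfl⟩ : ∃ b, d = a + b := ⟨d - a, by omega⟩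
    have hb : a + 2 ≤ b := by omega
    have e1 : a + 1 - 1 = a := by omega
    have e2 : 2*(a+1) - 1 = 2*a + 1 := by omega
    rw [e1, e2]
    have e3 : a + b - a = b := by omega
    rw [e3]
    nlinarith [hb]
  omega
set_option maxHeartbeats 2000000 in
open Classical in
theorem stmt6 (d n r S : ℕ) (hd : 0 < d) (hn : 0 < n) (hr : 0 < r) (hS : 0 < S)
    (X Y : Fin d → Finset ℕ)
    (hX : ∀ i, X i ⊆ Finset.Icc 1 n) (hY : ∀ j, Y j ⊆ Finset.Icc (n + 1) (2 * n))
    (hXd : ∀ i j : Fin d, i ≠ j → Disjoint (X i) (X j))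
    (hYd : ∀ i j : Fin d, i ≠ j → Disjoint (Y i) (Y j))
    (hXm : ∀ i j : Fin d, i ≤ j → (X j).card ≤ (X i).card)
    (hYm : ∀ i j : Fin d, i ≤ j → (Y j).card ≤ (Y i).card)
    (hlast : S ≤ (X ⟨d - 1, by omega⟩).card * (Y ⟨d - 1, by omega⟩).card)
    (T : Finset (Fin d × Fin d)) (hT : T.card = r) :
    ((Finset.univ.filter (fun π : Equiv.Perm (Fin n) =>
        ∀ p ∈ T, ∀ a : Fin n, (a : ℕ) + 1 ∈ X p.1 → n + (π a : ℕ) + 1 ∉ Y p.2)).card : ℝ)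
      / (Nat.factorial n) <
    Real.exp (-(S : ℝ) / n *
      ((⌊(3 * (d : ℝ) - Real.sqrt (9 * (d : ℝ) ^ 2 - 8 * r)) / 4⌋ : ℝ)) ^ 2) := by
  classical
  -- basic setup
  set F : ℝ := (3 * (d : ℝ) - Real.sqrt (9 * (d : ℝ) ^ 2 - 8 * r)) / 4 with hF
  have hrd2 : r ≤ d^2 := by
    rw [← hT]
    calc T.card ≤ Fintype.card (Fin d × Fin d) := Finset.card_le_univ T
      _ = d^2 := by simp [Fintype.card_prod]; ring
  have hsq_le : Real.sqrt (9 * (d : ℝ) ^ 2 - 8 * r) ≤ 3 * d := by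
    have h1 : (9 * (d : ℝ) ^ 2 - 8 * r) ≤ (3*(d:ℝ))^2 := by
      have : (0:ℝ) ≤ 8*(r:ℝ) := by positivity
      nlinarith
    calc Real.sqrt (9 * (d : ℝ) ^ 2 - 8 * r) ≤ Real.sqrt ((3*(d:ℝ))^2) :=
          Real.sqrt_le_sqrt h1
      _ = 3*(d:ℝ) := Real.sqrt_sq (by positivity)
  have hF0 : 0 ≤ F := by
    rw [hF]
    have := hsq_le
    linarith
  have hfl0 : 0 ≤ ⌊F⌋ := Int.floor_nonneg.mpr hF0
  set z : ℕ := (⌊F⌋).toNat with hz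
  have hzF : ((z:ℕ) : ℝ) = ((⌊F⌋ : ℤ) : ℝ) := by
    rw [hz]
    exact_mod_cast Int.toNat_of_nonneg hfl0
  have hzF' : ((z:ℕ) : ℝ) ≤ F := by
    rw [hzF]
    exact Int.floor_le F
  have hu0 : (0:ℝ) ≤ 9 * (d : ℝ) ^ 2 - 8 * r := by
    have h8 : (8:ℝ) * r ≤ 8 * (d:ℝ)^2 := by
      have : (r:ℝ) ≤ ((d^2 : ℕ):ℝ) := by exact_mod_cast hrd2
      push_cast at this
      linarith
    nlinarith
  have hsqd : (d:ℝ) ≤ Real.sqrt (9 * (d : ℝ) ^ 2 - 8 * r) := by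
    have h2 : (d:ℝ)^2 ≤ 9 * (d : ℝ) ^ 2 - 8 * r := by
      have : (r:ℝ) ≤ ((d^2 : ℕ):ℝ) := by exact_mod_cast hrd2
      push_cast at this
      nlinarith
    calc (d:ℝ) = Real.sqrt ((d:ℝ)^2) := (Real.sqrt_sq (by positivity)).symm
      _ ≤ Real.sqrt (9 * (d : ℝ) ^ 2 - 8 * r) := Real.sqrt_le_sqrt h2
  have hsqlt : Real.sqrt (9 * (d : ℝ) ^ 2 - 8 * r) ≤ 3*(d:ℝ) - 4*(z:ℝ) := by
    rw [hF] at hzF'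
    linarith
  have hzd : 2*z ≤ d := by
    have h1 : (d:ℝ) ≤ 3*(d:ℝ) - 4*(z:ℝ) := le_trans hsqd hsqlt
    have h2 : 2*(z:ℝ) ≤ (d:ℝ) := by linarith
    exact_mod_cast h2
  have hzr : 3*d*z ≤ r + 2*z^2 := by
    have hv0 : (0:ℝ) ≤ 3*(d:ℝ) - 4*(z:ℝ) :=
      le_trans (Real.sqrt_nonneg _) hsqlt
    have hsq2 : 9 * (d : ℝ) ^ 2 - 8 * r ≤ (3*(d:ℝ) - 4*(z:ℝ))^2 := by
      have := Real.sq_sqrt hu0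
      nlinarith [Real.sqrt_nonneg (9 * (d : ℝ) ^ 2 - 8 * r)]
    have h3 : 3*(d:ℝ)*(z:ℝ) ≤ (r:ℝ) + 2*(z:ℝ)^2 := by nlinarith
    exact_mod_cast h3
  rw [← hzF]
  -- families inside Fin n
  set Af : Fin d → Finset (Fin n) :=
    fun i => univ.filter (fun a : Fin n => (a:ℕ) + 1 ∈ X i) with hAf
  set Bf : Fin d → Finset (Fin n) :=
    fun j => univ.filter (fun b : Fin n => n + (b:ℕ) + 1 ∈ Y j) with hBf
  have hAcard : ∀ i, (Af i).card = (X i).card := by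
    intro i
    refine Finset.card_bij (fun (a : Fin n) _ => (a:ℕ) + 1) ?_ ?_ ?_
    · intro a ha
      exact (Finset.mem_filter.mp ha).2
    · intro a ha b hb hab
      exact Fin.ext (by omega)
    · intro m hm
      have hm' := hX i hm
      rw [Finset.mem_Icc] at hm'
      refine ⟨⟨m - 1, by omega⟩, Finset.mem_filter.mpr ⟨Finset.mem_univ _, ?_⟩, ?_⟩
      · show (m - 1) + 1 ∈ X i
        have he : (m - 1) + 1 = m := by omega
        rw [he]
        exact hm
      · show (m - 1) + 1 = m
        omega
  have hBcard : ∀ j, (Bf j).card = (Y j).card := by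
    intro j
    refine Finset.card_bij (fun (b : Fin n) _ => n + (b:ℕ) + 1) ?_ ?_ ?_
    · intro b hb
      exact (Finset.mem_filter.mp hb).2
    · intro a ha b hb hab
      exact Fin.ext (by omega)
    · intro m hm
      have hm' := hY j hm
      rw [Finset.mem_Icc] at hm'
      refine ⟨⟨m - n - 1, by omega⟩, Finset.mem_filter.mpr ⟨Finset.mem_univ _, ?_⟩, ?_⟩
      · show n + (m - n - 1) + 1 ∈ Y j
        have he : n + (m - n - 1) + 1 = m := by omega
        rw [he]
        exact hm
      · show n + (m - n - 1) + 1 = m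
        omega
  have hAdis : ∀ i j, i ≠ j → Disjoint (Af i) (Af j) := by
    intro i j hij
    rw [Finset.disjoint_left]
    intro a hai haj
    exact (Finset.disjoint_left.mp (hXd i j hij))
      ((Finset.mem_filter.mp hai).2) ((Finset.mem_filter.mp haj).2)
  have hBdis : ∀ i j, i ≠ j → Disjoint (Bf i) (Bf j) := by
    intro i j hij
    rw [Finset.disjoint_left]
    intro a hai haj
    exact (Finset.disjoint_left.mp (hYd i j hij))
      ((Finset.mem_filter.mp hai).2) ((Finset.mem_filter.mp haj).2)
  have hdlt : d - 1 < d := by omega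
  set last : Fin d := ⟨d - 1, hdlt⟩ with hlastd
  have hle_last : ∀ i : Fin d, i ≤ last := by
    intro i
    have hi := i.isLt
    rw [Fin.le_def]
    show (i : ℕ) ≤ d - 1
    omega
  set x0 := (X last).card with hx0d
  set y0 := (Y last).card with hy0d
  have hlast' : S ≤ x0 * y0 := hlast
  have hx01 : 1 ≤ x0 := by
    rcases Nat.eq_zero_or_pos x0 with h | h
    · rw [h, Nat.zero_mul] at hlast'
      omega
    · exact h
  have hy01 : 1 ≤ y0 := by
    rcases Nat.eq_zero_or_pos y0 with h | h
    · rw [h, Nat.mul_zero] at hlast'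
      omega
    · exact h
  have hAc : ∀ i, x0 ≤ (Af i).card := by
    intro i; rw [hAcard i]; exact hXm i last (hle_last i)
  have hBc : ∀ j, y0 ≤ (Bf j).card := by
    intro j; rw [hBcard j]; exact hYm j last (hle_last j)
  -- rewrite the filter
  have hEq : (Finset.univ.filter (fun π : Equiv.Perm (Fin n) =>
        ∀ p ∈ T, ∀ a : Fin n, (a : ℕ) + 1 ∈ X p.1 → n + (π a : ℕ) + 1 ∉ Y p.2))
      = (univ.filter (fun π : Equiv.Perm (Fin n) =>
        ∀ p ∈ T, ∀ a ∈ Af p.1, π a ∉ Bf p.2)) := by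
    apply Finset.filter_congr
    intro π _
    constructor
    · intro h p hp a ha hmem
      exact h p hp a ((Finset.mem_filter.mp ha).2) ((Finset.mem_filter.mp hmem).2)
    · intro h p hp a ha hmem
      exact h p hp a (Finset.mem_filter.mpr ⟨Finset.mem_univ _, ha⟩)
        (Finset.mem_filter.mpr ⟨Finset.mem_univ _, hmem⟩)
  rw [hEq]
  set Bad : Finset (Equiv.Perm (Fin n)) :=
    univ.filter (fun π : Equiv.Perm (Fin n) =>
      ∀ p ∈ T, ∀ a ∈ Af p.1, π a ∉ Bf p.2) with hBad
  by_cases hz0 : z = 0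
  · -- trivial case : floor = 0, RHS = 1, LHS < 1
    rw [hz0]
    norm_num
    -- goal : card / n! < 1
    obtain ⟨p, hp⟩ := Finset.card_pos.mp (by omega : 0 < T.card)
    have hXp : 0 < (X p.1).card := lt_of_lt_of_le hx01 (hXm p.1 last (hle_last p.1))
    have hYp : 0 < (Y p.2).card := lt_of_lt_of_le hy01 (hYm p.2 last (hle_last p.2))
    obtain ⟨m, hm⟩ := Finset.card_pos.mp hXp
    obtain ⟨m', hm'⟩ := Finset.card_pos.mp hYp
    have hmI := Finset.mem_Icc.mp (hX p.1 hm)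
    have hmI' := Finset.mem_Icc.mp (hY p.2 hm')
    set a : Fin n := ⟨m - 1, by omega⟩ with ha
    set b : Fin n := ⟨m' - n - 1, by omega⟩ with hb
    set π₀ : Equiv.Perm (Fin n) := Equiv.swap a b with hπ₀
    have hπ₀a : π₀ a = b := Equiv.swap_apply_left a b
    have hπnot : π₀ ∉ Bad := by
      rw [hBad]
      intro hmem
      have hpred := (Finset.mem_filter.mp hmem).2
      have haA : a ∈ Af p.1 := by
        refine Finset.mem_filter.mpr ⟨Finset.mem_univ _, ?_⟩
        show (m - 1) + 1 ∈ X p.1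
        have he : (m - 1) + 1 = m := by omega
        rw [he]; exact hm
      have hbB : π₀ a ∈ Bf p.2 := by
        rw [hπ₀a]
        refine Finset.mem_filter.mpr ⟨Finset.mem_univ _, ?_⟩
        show n + (m' - n - 1) + 1 ∈ Y p.2
        have he : n + (m' - n - 1) + 1 = m' := by omega
        rw [he]; exact hm'
      exact hpred p hp a haA hbB
    have hcard : Bad.card ≤ n.factorial - 1 := by
      have hsub : Bad ⊆ univ.erase π₀ := by
        intro σ hσ
        refine Finset.mem_erase.mpr ⟨?_, Finset.mem_univ _⟩
        intro hEqσ
        exact hπnot (hEqσ ▸ hσ)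
      have := Finset.card_le_card hsub
      rw [Finset.card_erase_of_mem (Finset.mem_univ _)] at this
      have hcu : (univ : Finset (Equiv.Perm (Fin n))).card = n.factorial := by
        rw [Finset.card_univ, Fintype.card_perm, Fintype.card_fin]
      rw [hcu] at this
      exact this
    have hfpos : (0:ℝ) < (n.factorial : ℝ) := by exact_mod_cast n.factorial_pos
    rw [div_lt_one hfpos]
    calc (Bad.card : ℝ)
        ≤ ((n.factorial - 1 : ℕ) : ℝ) := by exact_mod_cast hcard
      _ < (n.factorial : ℝ) := by
          have h1 : 1 ≤ n.factorial := n.factorial_pos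
          have : (n.factorial - 1 : ℕ) < n.factorial := by omega
          exact_mod_cast this
  · -- main case
    have hz1 : 1 ≤ z := by omega
    -- derive the integer inequalities from the floor bound
    by_cases hxy : x0 ≤ y0
    · -- use rows
      have hIz := pigeon d z r T hT hz1 hzd hzr
      rw [hBad]
      exact core n d z S x0 y0 hn hz1 hx01 hxy hlast' hzd Af Bf hAc hBc hAdis hBdis T
        (univ.filter (fun i : Fin d => 2*z ≤ ((T.filter (fun p => p.1 = i)).card)))
        hIz (fun i hi => (Finset.mem_filter.mp hi).2)
    · -- use columns via the inverse permutation
      push_neg at hxy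
      set T' : Finset (Fin d × Fin d) := T.image Prod.swap with hT'def
      have hT' : T'.card = r := by
        rw [hT'def, Finset.card_image_of_injective _ Prod.swap_injective]
        exact hT
      have hmemT' : ∀ q, q ∈ T' ↔ ∃ p ∈ T, p.2 = q.1 ∧ p.1 = q.2 := by
        intro q
        rw [hT'def]
        constructor
        · intro hq
          rcases Finset.mem_image.mp hq with ⟨p, hp, rfl⟩
          exact ⟨p, hp, rfl, rfl⟩
        · rintro ⟨p, hp, h1, h2⟩
          refine Finset.mem_image.mpr ⟨p, hp, ?_⟩
          rw [Prod.ext_iff]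
          exact ⟨h1, h2⟩
      have hswap : Bad.card = (univ.filter (fun π : Equiv.Perm (Fin n) =>
          ∀ q ∈ T', ∀ b ∈ Bf q.1, π b ∉ Af q.2)).card := by
        rw [hBad]
        apply Finset.card_bij (fun (π : Equiv.Perm (Fin n)) _ => π⁻¹)
        · intro π hπ
          have hpred := (Finset.mem_filter.mp hπ).2
          refine Finset.mem_filter.mpr ⟨Finset.mem_univ _, ?_⟩
          intro q hq b hb hmem
          rcases (hmemT' q).mp hq with ⟨p, hp, h1, h2⟩
          rw [← h1] at hb
          rw [← h2] at hmem
          have := hpred p hp (π⁻¹ b) hmem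
          rw [Equiv.Perm.coe_inv, Equiv.apply_symm_apply] at this
          exact this hb
        · intro π hπ τ hτ hst
          exact inv_injective hst
        · intro σ hσ
          refine ⟨σ⁻¹, ?_, by simp⟩
          have hpred := (Finset.mem_filter.mp hσ).2
          refine Finset.mem_filter.mpr ⟨Finset.mem_univ _, ?_⟩
          intro p hp a ha hmem
          have hq : p.swap ∈ T' := by
            rw [hT'def]
            exact Finset.mem_image_of_mem _ hp
          have := hpred p.swap hq (σ⁻¹ a) (by simpa using hmem)
          rw [Equiv.Perm.coe_inv, Equiv.apply_symm_apply] at this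
          simp only [Prod.snd_swap] at this
          exact this ha
      rw [hswap]
      have hIz := pigeon d z r T' hT' hz1 hzd hzr
      exact core n d z S y0 x0 hn hz1 hy01 (le_of_lt hxy)
        (by rw [Nat.mul_comm]; exact hlast') hzd Bf Af hBc hAc hBdis hAdis T'
        (univ.filter (fun i : Fin d => 2*z ≤ ((T'.filter (fun p => p.1 = i)).card)))
        hIz (fun i hi => (Finset.mem_filter.mp hi).2)
end

section
/- Let M, n, s, t be positive integers with M ≤ C(t,2) + t, let ρ > 0 and δ > 0 be reals with ⌈ρn⌉ even, and suppose t^n · C(t², M) · C(s²M, ⌈ρn⌉/2) < δD, where D is the number of ρ-regular graphs on vertex set [n]. Then, with probability at least 1 − δ, the uniformly random ρ-regular graph G(ρ, n) has the property that for every partition of [n] into sets X₁,…,X_t each of size at most s, more than M of the pairs (X_i, X_j) with 1 ≤ i ≤ j ≤ t satisfy e_{G(ρ,n)}(X_i, X_j) > 0. -/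
set_option maxHeartbeats 1000000

private lemma stmt8_aux (M t : ℕ) (ht : 0 < t) (hMt : M ≤ t.choose 2 + t) :
    M ≤ t * t := by
  refine hMt.trans ?_
  rw [Nat.choose_two_right]
  have h3 : t * (t - 1) = t * t - t := Nat.mul_pred ..
  have h4 : t * (t - 1) / 2 ≤ t * (t - 1) := Nat.div_le_self _ _
  have h5 : t ≤ t * t := Nat.le_mul_of_pos_left t ht
  omega

open Classical in
theorem stmt8 (M n s t : ℕ) (hM : 0 < M) (hn : 0 < n) (hs : 0 < s) (ht : 0 < t)
    (hMt : M ≤ t.choose 2 + t) (ρ δ : ℝ) (hρ : 0 < ρ) (hδ : 0 < δ)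
    (heven : Even ⌈ρ * n⌉₊)
    (D good : ℕ)
    (hD : D = (Finset.univ.filter (fun G : SimpleGraph (Fin n) =>
        (∀ v, G.degree v = ⌊ρ⌋₊ ∨ G.degree v = ⌈ρ⌉₊) ∧
        G.edgeFinset.card = ⌈ρ * n⌉₊ / 2)).card)
    (hineq : (t : ℝ) ^ n * ((t ^ 2).choose M : ℝ) *
        (((s ^ 2 * M).choose (⌈ρ * n⌉₊ / 2) : ℝ)) < δ * D)
    (hgood : good = (Finset.univ.filter (fun G : SimpleGraph (Fin n) =>
        ((∀ v, G.degree v = ⌊ρ⌋₊ ∨ G.degree v = ⌈ρ⌉₊) ∧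
          G.edgeFinset.card = ⌈ρ * n⌉₊ / 2) ∧
        ∀ X : Fin t → Finset (Fin n),
          (∀ i j, i ≠ j → Disjoint (X i) (X j)) →
          (∀ v, ∃ i, v ∈ X i) → (∀ i, (X i).card ≤ s) →
          M < (Finset.univ.filter (fun p : Fin t × Fin t =>
            p.1 ≤ p.2 ∧ ∃ a ∈ X p.1, ∃ b ∈ X p.2, G.Adj a b)).card)).card) :
    (1 - δ) * (D : ℝ) ≤ (good : ℝ) := by
  classical
  set m := ⌈ρ * n⌉₊ / 2 with hm
  -- the bad set
  set bad : Finset (SimpleGraph (Fin n)) := Finset.univ.filter (fun G : SimpleGraph (Fin n) =>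
      ((∀ v, G.degree v = ⌊ρ⌋₊ ∨ G.degree v = ⌈ρ⌉₊) ∧ G.edgeFinset.card = m) ∧
      ¬ (∀ X : Fin t → Finset (Fin n),
          (∀ i j, i ≠ j → Disjoint (X i) (X j)) →
          (∀ v, ∃ i, v ∈ X i) → (∀ i, (X i).card ≤ s) →
          M < (Finset.univ.filter (fun p : Fin t × Fin t =>
            p.1 ≤ p.2 ∧ ∃ a ∈ X p.1, ∃ b ∈ X p.2, G.Adj a b)).card)) with hbad
  have hsplit : D ≤ good + bad.card := by
    rw [hD, hgood]
    refine le_trans (Finset.card_le_card (fun G hG => ?_)) (Finset.card_union_le _ _)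
    simp only [hbad, Finset.mem_filter, Finset.mem_union, Finset.mem_univ, true_and] at hG ⊢
    tauto
  have hMtt : M ≤ t * t := stmt8_aux M t ht hMt
  have hbound : bad.card ≤ t ^ n * (t ^ 2).choose M * (s ^ 2 * M).choose m := by
    set Sset : (Fin n → Fin t) → Finset (Fin t × Fin t) → Finset (Sym2 (Fin n)) :=
      fun f P => P.biUnion (fun p =>
        ((Finset.univ.filter (fun v => f v = p.1)) ×ˢ
          (Finset.univ.filter (fun v => f v = p.2))).image (Function.uncurry Sym2.mk)) with hS
    set W : Finset ((Fin n → Fin t) × Finset (Fin t × Fin t)) :=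
      (Finset.univ.filter (fun f : Fin n → Fin t =>
        ∀ i, (Finset.univ.filter (fun v => f v = i)).card ≤ s)) ×ˢ
        Finset.univ.powersetCard M with hW
    have hsubset : bad ⊆ W.biUnion (fun fp => Finset.univ.filter
        (fun G : SimpleGraph (Fin n) => G.edgeFinset.card = m ∧ G.edgeFinset ⊆ Sset fp.1 fp.2)) := by
      intro G hG
      simp only [hbad, Finset.mem_filter, Finset.mem_univ, true_and] at hG
      obtain ⟨⟨hdeg, hcard⟩, hnot⟩ := hG
      push_neg at hnot
      obtain ⟨X, hdisj, hcov, hsize, hle⟩ := hnot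
      set f : Fin n → Fin t := fun v => Classical.choose (hcov v) with hf
      have hfX : ∀ v, v ∈ X (f v) := fun v => Classical.choose_spec (hcov v)
      have hYX : ∀ i, (Finset.univ.filter (fun v => f v = i)) ⊆ X i := by
        intro i v hv
        rw [Finset.mem_filter] at hv
        rw [← hv.2]; exact hfX v
      have hYs : ∀ i, (Finset.univ.filter (fun v => f v = i)).card ≤ s :=
        fun i => le_trans (Finset.card_le_card (hYX i)) (hsize i)
      set Q : Finset (Fin t × Fin t) := Finset.univ.filter (fun p : Fin t × Fin t =>
        p.1 ≤ p.2 ∧ ∃ a ∈ Finset.univ.filter (fun v => f v = p.1),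
          ∃ b ∈ Finset.univ.filter (fun v => f v = p.2), G.Adj a b) with hQ
      have hQle : Q.card ≤ M := by
        refine le_trans (Finset.card_le_card ?_) hle
        intro p hp
        simp only [hQ, Finset.mem_filter, Finset.mem_univ, true_and] at hp ⊢
        obtain ⟨h1, a, ha, b, hb, hab⟩ := hp
        exact ⟨h1, a, hYX _ (Finset.mem_filter.2 ⟨Finset.mem_univ _, ha⟩),
          b, hYX _ (Finset.mem_filter.2 ⟨Finset.mem_univ _, hb⟩), hab⟩
      obtain ⟨P, hQP, _, hPcard⟩ := Finset.exists_subsuperset_card_eq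
        (Finset.subset_univ Q) hQle (by simpa using hMtt)
      refine Finset.mem_biUnion.2 ⟨(f, P), ?_, ?_⟩
      · rw [hW, Finset.mem_product]
        exact ⟨Finset.mem_filter.2 ⟨Finset.mem_univ _, hYs⟩,
          Finset.mem_powersetCard.2 ⟨Finset.subset_univ _, hPcard⟩⟩
      · rw [Finset.mem_filter]
        refine ⟨Finset.mem_univ _, hcard, ?_⟩
        intro e he
        induction e using Sym2.ind with
        | _ a b =>
          rw [SimpleGraph.mem_edgeFinset, SimpleGraph.mem_edgeSet] at he
          simp only [hS]
          rcases le_total (f a) (f b) with h | h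
          · have hpQ : (f a, f b) ∈ Q := by
              simp only [hQ, Finset.mem_filter, Finset.mem_univ, true_and]
              exact ⟨h, a, by simp, b, by simp, he⟩
            refine Finset.mem_biUnion.2 ⟨(f a, f b), hQP hpQ, ?_⟩
            exact Finset.mem_image.2 ⟨(a, b), by simp, rfl⟩
          · have hpQ : (f b, f a) ∈ Q := by
              simp only [hQ, Finset.mem_filter, Finset.mem_univ, true_and]
              exact ⟨h, b, by simp, a, by simp, he.symm⟩
            refine Finset.mem_biUnion.2 ⟨(f b, f a), hQP hpQ, ?_⟩
            exact Finset.mem_image.2 ⟨(b, a), by simp, Sym2.eq_swap⟩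
    have hcount : ∀ fp ∈ W, (Finset.univ.filter
        (fun G : SimpleGraph (Fin n) => G.edgeFinset.card = m ∧ G.edgeFinset ⊆ Sset fp.1 fp.2)).card
        ≤ (s ^ 2 * M).choose m := by
      intro fp hfp
      rw [hW, Finset.mem_product] at hfp
      have hfs : ∀ i, (Finset.univ.filter (fun v => fp.1 v = i)).card ≤ s :=
        (Finset.mem_filter.1 hfp.1).2
      have hPM : fp.2.card = M := (Finset.mem_powersetCard.1 hfp.2).2
      have hScard : (Sset fp.1 fp.2).card ≤ s ^ 2 * M := by
        simp only [hS]
        refine le_trans (Finset.card_biUnion_le) ?_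
        refine le_trans (Finset.sum_le_card_nsmul _ _ (s * s) ?_) ?_
        · intro p hp
          refine le_trans (Finset.card_image_le) ?_
          rw [Finset.card_product]
          exact Nat.mul_le_mul (hfs _) (hfs _)
        · rw [smul_eq_mul, hPM]
          exact le_of_eq (by ring)
      calc (Finset.univ.filter (fun G : SimpleGraph (Fin n) =>
              G.edgeFinset.card = m ∧ G.edgeFinset ⊆ Sset fp.1 fp.2)).card
          ≤ ((Sset fp.1 fp.2).powersetCard m).card := by
            refine Finset.card_le_card_of_injOn (fun G => G.edgeFinset) ?_ ?_
            · intro G hG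
              rw [Finset.mem_coe, Finset.mem_filter] at hG
              exact Finset.mem_coe.2 <| Finset.mem_powersetCard.2 ⟨hG.2.2, hG.2.1⟩
            · intro G _ G' _ h
              exact SimpleGraph.edgeFinset_inj.1 h
        _ = (Sset fp.1 fp.2).card.choose m := Finset.card_powersetCard _ _
        _ ≤ (s ^ 2 * M).choose m := Nat.choose_le_choose _ hScard
    calc bad.card ≤ (W.biUnion (fun fp => Finset.univ.filter
            (fun G : SimpleGraph (Fin n) =>
              G.edgeFinset.card = m ∧ G.edgeFinset ⊆ Sset fp.1 fp.2))).card :=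
          Finset.card_le_card hsubset
      _ ≤ ∑ fp ∈ W, (Finset.univ.filter (fun G : SimpleGraph (Fin n) =>
            G.edgeFinset.card = m ∧ G.edgeFinset ⊆ Sset fp.1 fp.2)).card :=
          Finset.card_biUnion_le
      _ ≤ W.card * (s ^ 2 * M).choose m := by
          simpa using Finset.sum_le_card_nsmul _ _ _ hcount
      _ ≤ t ^ n * (t ^ 2).choose M * (s ^ 2 * M).choose m := by
          refine Nat.mul_le_mul_right _ ?_
          rw [hW, Finset.card_product, Finset.card_powersetCard]
          have h1 : (Finset.univ.filter (fun f : Fin n → Fin t =>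
              ∀ i, (Finset.univ.filter (fun v => f v = i)).card ≤ s)).card ≤ t ^ n :=
            le_trans (Finset.card_filter_le _ _) (by simp)
          have h2 : (Finset.univ : Finset (Fin t × Fin t)).card = t ^ 2 := by simp [sq]
          rw [h2]
          exact Nat.mul_le_mul h1 le_rfl
  have hbadR : (bad.card : ℝ) < δ * D := by
    refine lt_of_le_of_lt ?_ hineq
    exact_mod_cast hbound
  have hgoodR : (D : ℝ) ≤ (good : ℝ) + bad.card := by exact_mod_cast hsplit
  have hring : (1 - δ) * (D : ℝ) = D - δ * D := by ring
  rw [hring]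
  linarith
end

section
/- Every ordered matching with 2n vertices and interval chromatic number two satisfies OR(M) ≤ 2n². That is, every 2-coloring of the edges of the ordered complete graph on 2n² vertices contains a monochromatic ordered copy of M. -/
/-- The ordered matching with interval chromatic number two given by a permutation `π` of
`[n]`: vertex set `[2n]`, edges `{i, n + π(i)}` (0-indexed). -/
def permMatching (n : ℕ) (π : Equiv.Perm (Fin n)) : SimpleGraph (Fin (2 * n)) :=
  SimpleGraph.fromRel (fun a b => ∃ i : Fin n, (a : ℕ) = (i : ℕ) ∧ (b : ℕ) = n + (π i : ℕ))

lemma blockLt (n : ℕ) (i k : Fin n) : i.val * n + k.val < n ^ 2 := by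
  calc i.val * n + k.val < i.val * n + n := Nat.add_lt_add_left k.isLt _
    _ = (i.val + 1) * n := (Nat.succ_mul i.val n).symm
    _ ≤ n * n := Nat.mul_le_mul_right n i.isLt
    _ = n ^ 2 := (sq n).symm

lemma blockMono {n : ℕ} {i i' : Fin n} (k k' : Fin n) (h : i.val < i'.val) :
    i.val * n + k.val < i'.val * n + k'.val := by
  calc i.val * n + k.val < i.val * n + n := Nat.add_lt_add_left k.isLt _
    _ = (i.val + 1) * n := (Nat.succ_mul i.val n).symm
    _ ≤ i'.val * n := Nat.mul_le_mul_right n h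
    _ ≤ i'.val * n + k'.val := Nat.le_add_right _ _

/-- Left vertex: block `i`, slot `k`. -/
def LV (n : ℕ) (i k : Fin n) : Fin (2 * n ^ 2) :=
  ⟨i.val * n + k.val, by have := blockLt n i k; omega⟩

/-- Right vertex: block `j`, slot `l`. -/
def RV (n : ℕ) (j l : Fin n) : Fin (2 * n ^ 2) :=
  ⟨n ^ 2 + (j.val * n + l.val), by have := blockLt n j l; omega⟩

lemma LV_lt_LV₁ {n : ℕ} {i i' : Fin n} (k k' : Fin n) (h : i < i') :
    LV n i k < LV n i' k' := by
  simpa [LV, Fin.lt_def] using blockMono k k' h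

lemma LV_lt_LV₂ {n : ℕ} (i : Fin n) {k k' : Fin n} (h : k < k') :
    LV n i k < LV n i k' := by
  simp only [LV, Fin.lt_def]
  exact Nat.add_lt_add_left h _

lemma LV_lt_RV {n : ℕ} (i k j l : Fin n) : LV n i k < RV n j l := by
  simp only [LV, RV, Fin.lt_def]
  have := blockLt n i k
  omega

lemma RV_lt_RV₁ {n : ℕ} {j j' : Fin n} (l l' : Fin n) (h : j < j') :
    RV n j l < RV n j' l' := by
  have := blockMono l l' h
  simp only [RV, Fin.lt_def]
  omega

lemma RV_lt_RV₂ {n : ℕ} (j : Fin n) {l l' : Fin n} (h : l < l') :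
    RV n j l < RV n j l' := by
  simp only [RV, Fin.lt_def]
  have : (l : ℕ) < (l' : ℕ) := h
  omega

theorem stmt12 (n : ℕ) (hn : 0 < n) (π : Equiv.Perm (Fin n))
    (c : Sym2 (Fin (2 * n ^ 2)) → Bool) :
    ∃ f : Fin (2 * n) → Fin (2 * n ^ 2), StrictMono f ∧ ∃ col : Bool,
      ∀ u v, (permMatching n π).Adj u v → c s(f u, f v) = col := by
  by_cases H : ∀ i : Fin n, ∃ k l : Fin n, c s(LV n i k, RV n (π i) l) = true
  · -- every block pair has a `true` edge
    choose a b hab using H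
    refine ⟨fun u => if h : (u : ℕ) < n then LV n ⟨u, h⟩ (a ⟨u, h⟩)
        else RV n ⟨(u : ℕ) - n, by have := u.isLt; omega⟩
          (b (π⁻¹ ⟨(u : ℕ) - n, by have := u.isLt; omega⟩)), ?_, true, ?_⟩
    · intro u v huv
      have huv' : (u : ℕ) < (v : ℕ) := huv
      by_cases h1 : (u : ℕ) < n <;> by_cases h2 : (v : ℕ) < n <;>
        simp only [dif_pos, dif_neg, h1, h2, dite_true, dite_false]
      · exact LV_lt_LV₁ _ _ (Fin.mk_lt_mk.mpr huv')
      · exact LV_lt_RV _ _ _ _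
      · exact absurd huv' (by omega)
      · exact RV_lt_RV₁ _ _ (Fin.mk_lt_mk.mpr (by omega))
    · intro u v hadj
      rw [permMatching, SimpleGraph.fromRel_adj] at hadj
      obtain ⟨hne, ⟨i, hu, hv⟩ | ⟨i, hv, hu⟩⟩ := hadj
      · have hun : (u : ℕ) < n := by rw [hu]; exact i.isLt
        have hvn : ¬ (v : ℕ) < n := by rw [hv]; omega
        have e1 : (⟨(u : ℕ), hun⟩ : Fin n) = i := Fin.ext hu
        have e2 : (⟨(v : ℕ) - n, by have := v.isLt; omega⟩ : Fin n) = π i := by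
          apply Fin.ext; simp [hv]
        simp only [dif_pos hun, dif_neg hvn, e1, e2, Equiv.Perm.inv_def, Equiv.symm_apply_apply]
        exact hab i
      · have hvn : (v : ℕ) < n := by rw [hv]; exact i.isLt
        have hun : ¬ (u : ℕ) < n := by rw [hu]; omega
        have e1 : (⟨(v : ℕ), hvn⟩ : Fin n) = i := Fin.ext hv
        have e2 : (⟨(u : ℕ) - n, by have := u.isLt; omega⟩ : Fin n) = π i := by
          apply Fin.ext; simp [hu]
        simp only [dif_pos hvn, dif_neg hun, e1, e2, Equiv.Perm.inv_def, Equiv.symm_apply_apply]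
        rw [Sym2.eq_swap]
        exact hab i
  · -- some block pair is entirely `false`: embed everything inside it
    push_neg at H
    obtain ⟨i₀, h0⟩ := H
    refine ⟨fun u => if h : (u : ℕ) < n then LV n i₀ ⟨u, h⟩
        else RV n (π i₀) ⟨(u : ℕ) - n, by have := u.isLt; omega⟩, ?_, false, ?_⟩
    · intro u v huv
      have huv' : (u : ℕ) < (v : ℕ) := huv
      by_cases h1 : (u : ℕ) < n <;> by_cases h2 : (v : ℕ) < n <;>
        simp only [dif_pos, dif_neg, h1, h2, dite_true, dite_false]
      · exact LV_lt_LV₂ _ (Fin.mk_lt_mk.mpr huv')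
      · exact LV_lt_RV _ _ _ _
      · exact absurd huv' (by omega)
      · exact RV_lt_RV₂ _ (Fin.mk_lt_mk.mpr (by omega))
    · intro u v hadj
      rw [permMatching, SimpleGraph.fromRel_adj] at hadj
      obtain ⟨hne, ⟨i, hu, hv⟩ | ⟨i, hv, hu⟩⟩ := hadj
      · have hun : (u : ℕ) < n := by rw [hu]; exact i.isLt
        have hvn : ¬ (v : ℕ) < n := by rw [hv]; omega
        simp only [dif_pos hun, dif_neg hvn]
        exact (Bool.not_eq_true _).mp (h0 _ _)
      · have hvn : (v : ℕ) < n := by rw [hv]; exact i.isLt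
        have hun : ¬ (u : ℕ) < n := by rw [hu]; omega
        simp only [dif_pos hvn, dif_neg hun]
        rw [Sym2.eq_swap]
        exact (Bool.not_eq_true _).mp (h0 _ _)
end

section
/- Every bipartite 2-regular graph G on n vertices (a disjoint union of even cycles) admits an ordering 𝒢 such that 𝒢 is an ordered subgraph of the 2-blow-up P²_n of the alternating path on n vertices. -/
/-- The `k`-blow-up of the alternating path on `n` vertices. -/
def blowup (k n : ℕ) : SimpleGraph (Fin (k * n)) :=
  SimpleGraph.fromRel (fun a b => pathRel n ((a : ℕ) / k) ((b : ℕ) / k))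

private lemma walk_parity {V : Type} {G : SimpleGraph V} (col : V → Fin 2)
    (hcol : ∀ u v, G.Adj u v → col u ≠ col v) :
    ∀ {x y : V} (p : G.Walk x y), p.length % 2 = ((col x : ℕ) + (col y : ℕ)) % 2 := by
  intro x y p
  induction p with
  | nil => simp only [SimpleGraph.Walk.length_nil]; omega
  | @cons x w y h q ih =>
    have hne : (col x : ℕ) ≠ (col w : ℕ) := fun e => hcol _ _ h (Fin.ext e)
    have h1 : (col x : ℕ) < 2 := (col x).is_lt
    have h2 : (col w : ℕ) < 2 := (col w).is_lt
    have h3 : (col y : ℕ) < 2 := (col y).is_lt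
    simp only [SimpleGraph.Walk.length_cons]
    omega

private lemma walk_head {V : Type} {G : SimpleGraph V} :
    ∀ {x y : V} (p : G.Walk x y), p.length ≠ 0 →
      ∃ (u : V) (_ : G.Adj x u) (q : G.Walk u y), p.length = q.length + 1 := by
  intro x y p hp
  cases p with
  | nil => simp at hp
  | cons h q => exact ⟨_, h, q, by simp⟩

private lemma aux : ∀ (N : ℕ) (V : Type) [Fintype V] [DecidableEq V] (G : SimpleGraph V),
    Fintype.card V = N →
    (∀ v : V, ∃ a c : V, a ≠ c ∧ ∀ w, G.Adj v w ↔ w = a ∨ w = c) →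
    (∃ col : V → Fin 2, ∀ u v, G.Adj u v → col u ≠ col v) →
    ∃ (g : V → ℕ) (s : V → Fin 2), (∀ v, g v < N) ∧
      (∀ u v, g u = g v → s u = s v → u = v) ∧
      (∀ u v, G.Adj u v → g u + 1 = g v ∨ g v + 1 = g u) := by
  intro N
  induction N using Nat.strong_induction_on with
  | _ N IH =>
  intro V _ _ G hcard hreg hbip
  classical
  rcases isEmpty_or_nonempty V with hV | hV
  · exact ⟨fun v => isEmptyElim v, fun v => isEmptyElim v, fun v => isEmptyElim v,
      fun u => isEmptyElim u, fun u => isEmptyElim u⟩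
  obtain ⟨b⟩ := hV
  obtain ⟨col, hcol⟩ := hbip
  have hRclosed : ∀ {u v : V}, G.Reachable b u → G.Adj u v → G.Reachable b v :=
    fun hu h => hu.trans h.reachable
  have hdist_le : ∀ {u v : V}, G.Reachable b u → G.Adj u v → G.dist b v ≤ G.dist b u + 1 := by
    intro u v hu h
    obtain ⟨p, hp⟩ := hu.exists_walk_length_eq_dist
    calc G.dist b v ≤ (p.concat h).length := SimpleGraph.dist_le _
    _ = G.dist b u + 1 := by rw [SimpleGraph.Walk.length_concat, hp]
  have hpar : ∀ {v : V}, G.Reachable b v →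
      G.dist b v % 2 = ((col b : ℕ) + (col v : ℕ)) % 2 := by
    intro v hv
    obtain ⟨p, hp⟩ := hv.exists_walk_length_eq_dist
    rw [← hp]; exact walk_parity col hcol p
  have hstep : ∀ u v : V, G.Reachable b u → G.Adj u v →
      G.dist b u + 1 = G.dist b v ∨ G.dist b v + 1 = G.dist b u := by
    intro u v hu h
    have hv := hRclosed hu h
    have h1 := hdist_le hu h
    have h2 := hdist_le hv h.symm
    have hne : (col u : ℕ) ≠ (col v : ℕ) := fun e => hcol _ _ h (Fin.ext e)
    have p1 := hpar hu
    have p2 := hpar hv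
    have c1 : (col u : ℕ) < 2 := (col u).is_lt
    have c2 : (col v : ℕ) < 2 := (col v).is_lt
    have c3 : (col b : ℕ) < 2 := (col b).is_lt
    omega
  have hparent : ∀ (k : ℕ) (v : V), G.Reachable b v → G.dist b v = k + 1 →
      ∃ u, G.Adj u v ∧ G.Reachable b u ∧ G.dist b u = k := by
    intro k v hv hdv
    obtain ⟨p, hp⟩ := hv.exists_walk_length_eq_dist
    have hlen : p.reverse.length ≠ 0 := by
      rw [SimpleGraph.Walk.length_reverse, hp, hdv]; omega
    obtain ⟨u, h, q, hq⟩ := walk_head p.reverse hlen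
    have hru : G.Reachable b u := ⟨q.reverse⟩
    have hqr : G.dist b u ≤ q.length := by
      have := SimpleGraph.dist_le q.reverse
      rwa [SimpleGraph.Walk.length_reverse] at this
    have hplen : p.length = q.length + 1 := by
      rw [← SimpleGraph.Walk.length_reverse p]; exact hq
    have hdvle : G.dist b v ≤ G.dist b u + 1 := hdist_le hru h.symm
    exact ⟨u, h.symm, hru, by omega⟩
  have htwo : ∀ (u x y z : V), G.Adj u x → G.Adj u y → G.Adj u z →
      x ≠ y → x ≠ z → y ≠ z → False := by
    intro u x y z hx hy hz hxy hxz hyz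
    obtain ⟨a, c, hac, hiff⟩ := hreg u
    have h1 := (hiff x).mp hx
    have h2 := (hiff y).mp hy
    have h3 := (hiff z).mp hz
    rcases h1 with h1 | h1 <;> rcases h2 with h2 | h2 <;> rcases h3 with h3 | h3 <;>
      first
        | exact hxy (h1.trans h2.symm)
        | exact hxz (h1.trans h3.symm)
        | exact hyz (h2.trans h3.symm)
  have hsphere : ∀ (k : ℕ) (x y z : V), G.Reachable b x → G.Reachable b y → G.Reachable b z →
      G.dist b x = k → G.dist b y = k → G.dist b z = k →
      x ≠ y → x ≠ z → y ≠ z → False := by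
    intro k
    induction k using Nat.strong_induction_on with
    | _ k IHk =>
    intro x y z hrx hry hrz hdx hdy hdz hxy hxz hyz
    rcases k with _ | _ | k
    · have h1 := (hrx.dist_eq_zero_iff).mp hdx
      have h2 := (hry.dist_eq_zero_iff).mp hdy
      exact hxy (h1.symm.trans h2)
    · exact htwo b x y z (SimpleGraph.dist_eq_one_iff_adj.mp hdx)
        (SimpleGraph.dist_eq_one_iff_adj.mp hdy)
        (SimpleGraph.dist_eq_one_iff_adj.mp hdz) hxy hxz hyz
    · obtain ⟨px, hpx_adj, hpx_r, hpx_d⟩ := hparent (k + 1) x hrx (by omega)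
      obtain ⟨py, hpy_adj, hpy_r, hpy_d⟩ := hparent (k + 1) y hry (by omega)
      obtain ⟨pz, hpz_adj, hpz_r, hpz_d⟩ := hparent (k + 1) z hrz (by omega)
      by_cases h1 : px = py
      · subst h1
        obtain ⟨w, hw_adj, hw_r, hw_d⟩ := hparent k px hpx_r (by omega)
        exact htwo px x y w hpx_adj hpy_adj hw_adj.symm hxy
          (fun e => by subst e; omega) (fun e => by subst e; omega)
      by_cases h2 : px = pz
      · subst h2
        obtain ⟨w, hw_adj, hw_r, hw_d⟩ := hparent k px hpx_r (by omega)
        exact htwo px x z w hpx_adj hpz_adj hw_adj.symm hxz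
          (fun e => by subst e; omega) (fun e => by subst e; omega)
      by_cases h3 : py = pz
      · subst h3
        obtain ⟨w, hw_adj, hw_r, hw_d⟩ := hparent k py hpy_r (by omega)
        exact htwo py y z w hpy_adj hpz_adj hw_adj.symm hyz
          (fun e => by subst e; omega) (fun e => by subst e; omega)
      exact IHk (k + 1) (by omega) px py pz hpx_r hpy_r hpz_r hpx_d hpy_d hpz_d h1 h2 h3
  -- an eccentricity bound
  have hD : ∃ D : ℕ, (∀ v, G.Reachable b v → G.dist b v ≤ D) ∧
      D + 1 ≤ Fintype.card {v : V // G.Reachable b v} := by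
    set Rset : Finset V := Finset.univ.filter (fun v => G.Reachable b v) with hRset
    have hbR : b ∈ Rset := by
      simp only [hRset, Finset.mem_filter, Finset.mem_univ, true_and]
      exact SimpleGraph.Reachable.refl b
    obtain ⟨v0, hv0mem, hv0⟩ := Finset.exists_mem_eq_sup Rset ⟨b, hbR⟩ (fun v => G.dist b v)
    have hv0r : G.Reachable b v0 := by
      have := hv0mem; simp [hRset] at this; exact this
    refine ⟨Rset.sup (fun v => G.dist b v),
      fun v hv => Finset.le_sup (by simp [hRset, hv]), ?_⟩
    have hlevels : ∀ j : ℕ, ∃ v, G.Reachable b v ∧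
        G.dist b v = Rset.sup (fun v => G.dist b v) - j := by
      intro j
      induction j with
      | zero => exact ⟨v0, hv0r, by omega⟩
      | succ j ihj =>
        obtain ⟨v, hrv, hdv⟩ := ihj
        by_cases hj : Rset.sup (fun v => G.dist b v) - j = 0
        · exact ⟨v, hrv, by omega⟩
        · obtain ⟨u, _, hru, hdu⟩ :=
            hparent (Rset.sup (fun v => G.dist b v) - j - 1) v hrv (by omega)
          exact ⟨u, hru, by omega⟩
    have hF : ∀ k : Fin (Rset.sup (fun v => G.dist b v) + 1),
        ∃ v, G.Reachable b v ∧ G.dist b v = (k : ℕ) := by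
      intro k
      obtain ⟨v, hrv, hdv⟩ := hlevels (Rset.sup (fun v => G.dist b v) - (k : ℕ))
      have := k.is_lt
      exact ⟨v, hrv, by omega⟩
    choose F hF1 hF2 using hF
    have hinj : Function.Injective
        (fun k : Fin (Rset.sup (fun v => G.dist b v) + 1) =>
          (⟨F k, hF1 k⟩ : {v : V // G.Reachable b v})) := by
      intro i j hij
      have h1 := hF2 i
      have h2 := hF2 j
      have hFij : F i = F j := congrArg Subtype.val hij
      rw [hFij] at h1
      exact Fin.ext (by omega)
    simpa using Fintype.card_le_of_injective _ hinj
  obtain ⟨D, hDle, hDcard⟩ := hD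
  -- the complement subgraph
  have hregc : ∀ v : {v : V // ¬ G.Reachable b v},
      ∃ a c : {v : V // ¬ G.Reachable b v}, a ≠ c ∧
        ∀ w, (G.comap Subtype.val).Adj v w ↔ w = a ∨ w = c := by
    rintro ⟨v, hv⟩
    obtain ⟨a, c, hac, hiff⟩ := hreg v
    have hadj_a : G.Adj v a := (hiff a).mpr (Or.inl rfl)
    have hadj_c : G.Adj v c := (hiff c).mpr (Or.inr rfl)
    have hA : ¬ G.Reachable b a := fun h => hv (h.trans hadj_a.symm.reachable)
    have hC : ¬ G.Reachable b c := fun h => hv (h.trans hadj_c.symm.reachable)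
    refine ⟨⟨a, hA⟩, ⟨c, hC⟩, fun h => hac (congrArg Subtype.val h), ?_⟩
    rintro ⟨w, hw⟩
    constructor
    · intro h
      rcases (hiff w).mp h with rfl | rfl
      · exact Or.inl (Subtype.ext rfl)
      · exact Or.inr (Subtype.ext rfl)
    · intro h
      rcases h with h | h
      · have hw' : w = a := congrArg Subtype.val h
        subst hw'
        exact hadj_a
      · have hw' : w = c := congrArg Subtype.val h
        subst hw'
        exact hadj_c
  have hlt : Fintype.card {v : V // ¬ G.Reachable b v} < N := by
    rw [← hcard]
    exact Fintype.card_subtype_lt (x := b) (not_not_intro (SimpleGraph.Reachable.refl b))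
  obtain ⟨g', s', hg'lt, hg'inj, hg'adj⟩ :=
    IH (Fintype.card {v : V // ¬ G.Reachable b v}) hlt {v : V // ¬ G.Reachable b v}
      (G.comap Subtype.val) rfl hregc
      ⟨fun x => col x.1, fun u v h => hcol _ _ h⟩
  have hcardsum : Fintype.card {v : V // G.Reachable b v} +
      Fintype.card {v : V // ¬ G.Reachable b v} = N := by
    have h1 := Fintype.card_subtype_compl (fun v : V => G.Reachable b v)
    have h2 := Fintype.card_subtype_le (fun v : V => G.Reachable b v)
    omega
  obtain ⟨ι, hι⟩ : ∃ ι : V → ℕ, Function.Injective ι :=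
    ⟨fun v => ((Fintype.equivFin V) v : ℕ),
      fun u v h => (Fintype.equivFin V).injective (Fin.ext h)⟩
  refine ⟨fun v => if h : G.Reachable b v then G.dist b v else D + 1 + g' ⟨v, h⟩,
    fun v => if h : G.Reachable b v then
      (if ∃ w, w ≠ v ∧ G.Reachable b w ∧ G.dist b w = G.dist b v ∧ ι w < ι v then 1 else 0)
      else s' ⟨v, h⟩, ?_, ?_, ?_⟩
  · intro v
    dsimp only
    by_cases h : G.Reachable b v
    · rw [dif_pos h]
      have h1 := hDle v h
      omega
    · rw [dif_neg h]
      have h2 := hg'lt ⟨v, h⟩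
      omega
  · intro u v hg hs
    dsimp only at hg hs
    by_cases hu : G.Reachable b u <;> by_cases hv : G.Reachable b v
    · rw [dif_pos hu, dif_pos hv] at hg hs
      by_contra hne
      by_cases h1 : ∃ w, w ≠ u ∧ G.Reachable b w ∧ G.dist b w = G.dist b u ∧ ι w < ι u
      · rw [if_pos h1] at hs
        by_cases h2 : ∃ w, w ≠ v ∧ G.Reachable b w ∧ G.dist b w = G.dist b v ∧ ι w < ι v
        · obtain ⟨wu, hwu1, hwu2, hwu3, hwu4⟩ := h1
          obtain ⟨wv, hwv1, hwv2, hwv3, hwv4⟩ := h2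
          by_cases hx : wu = v
          · by_cases hy : wv = u
            · rw [hx] at hwu4
              rw [hy] at hwv4
              omega
            · exact hsphere (G.dist b u) u v wv hu hv hwv2 rfl hg.symm
                (hwv3.trans hg.symm) hne (fun e => hy e.symm) (fun e => hwv1 e.symm)
          · exact hsphere (G.dist b u) u v wu hu hv hwu2 rfl hg.symm hwu3 hne
              (fun e => hwu1 e.symm) (fun e => hx e.symm)
        · rw [if_neg h2] at hs
          exact absurd hs (by decide)
      · rw [if_neg h1] at hs
        by_cases h2 : ∃ w, w ≠ v ∧ G.Reachable b w ∧ G.dist b w = G.dist b v ∧ ι w < ι v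
        · rw [if_pos h2] at hs
          exact absurd hs (by decide)
        · have hne2 : ι u ≠ ι v := fun e => hne (hι e)
          rcases Nat.lt_or_ge (ι u) (ι v) with hlt2 | hge
          · exact h2 ⟨u, hne, hu, hg, hlt2⟩
          · exact h1 ⟨v, Ne.symm hne, hv, hg.symm, by omega⟩
    · rw [dif_pos hu, dif_neg hv] at hg
      have := hDle u hu
      omega
    · rw [dif_neg hu, dif_pos hv] at hg
      have := hDle v hv
      omega
    · rw [dif_neg hu, dif_neg hv] at hg hs
      have : (⟨u, hu⟩ : {v : V // ¬ G.Reachable b v}) = ⟨v, hv⟩ :=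
        hg'inj _ _ (by omega) hs
      exact congrArg Subtype.val this
  · intro u v h
    dsimp only
    by_cases hu : G.Reachable b u
    · have hv := hRclosed hu h
      rw [dif_pos hu, dif_pos hv]
      exact hstep u v hu h
    · have hv : ¬ G.Reachable b v := fun hr => hu (hr.trans h.symm.reachable)
      rw [dif_neg hu, dif_neg hv]
      rcases hg'adj ⟨u, hu⟩ ⟨v, hv⟩ h with h1 | h1
      · left; omega
      · right; omega

theorem stmt15 (n : ℕ) (V : Type) [Fintype V] [DecidableEq V]
    (G : SimpleGraph V) [DecidableRel G.Adj]
    (hcard : Fintype.card V = n) (hreg : ∀ v, G.degree v = 2)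
    (hbip : G.Colorable 2) :
    ∃ f : V → Fin (2 * n), Function.Injective f ∧
      ∀ u v, G.Adj u v → (blowup 2 n).Adj (f u) (f v) := by
  classical
  have hreg' : ∀ v : V, ∃ a c : V, a ≠ c ∧ ∀ w, G.Adj v w ↔ w = a ∨ w = c := by
    intro v
    have h2 : (G.neighborFinset v).card = 2 := hreg v
    obtain ⟨a, c, hac, hset⟩ := Finset.card_eq_two.mp h2
    refine ⟨a, c, hac, fun w => ?_⟩
    rw [← SimpleGraph.mem_neighborFinset, hset]
    simp
  have hbip' : ∃ col : V → Fin 2, ∀ u v, G.Adj u v → col u ≠ col v := by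
    obtain ⟨C⟩ := hbip
    exact ⟨C, fun u v h => C.valid h⟩
  obtain ⟨g, s, hglt, hinj, hadj⟩ := aux n V G hcard hreg' hbip'
  have haltlt : ∀ j, j < n → altPos n j < n := by
    intro j h; unfold altPos; split <;> omega
  have haltinj : ∀ i j, i < n → j < n → altPos n i = altPos n j → i = j := by
    intro i j hi hj h
    unfold altPos at h
    split at h <;> split at h <;> omega
  have hbound : ∀ v, 2 * altPos n (g v) + ((s v : ℕ)) < 2 * n := by
    intro v
    have h1 := haltlt _ (hglt v)
    have h2 := (s v).is_lt
    omega
  refine ⟨fun v => ⟨2 * altPos n (g v) + (s v : ℕ), hbound v⟩, ?_, ?_⟩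
  · intro u v h
    have h' : 2 * altPos n (g u) + (s u : ℕ) = 2 * altPos n (g v) + (s v : ℕ) :=
      congrArg Fin.val h
    have hsu := (s u).is_lt
    have hsv := (s v).is_lt
    have hba : altPos n (g u) = altPos n (g v) := by omega
    have hgg : g u = g v := haltinj _ _ (hglt u) (hglt v) hba
    exact hinj u v hgg (Fin.ext (by omega))
  · intro u v h
    have hne : u ≠ v := h.ne
    have hgne : g u ≠ g v := by
      intro e
      rcases hadj u v h with h1 | h1 <;> omega
    have hfne : (⟨2 * altPos n (g u) + (s u : ℕ), hbound u⟩ : Fin (2 * n)) ≠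
        ⟨2 * altPos n (g v) + (s v : ℕ), hbound v⟩ := by
      intro e
      have h' : 2 * altPos n (g u) + (s u : ℕ) = 2 * altPos n (g v) + (s v : ℕ) :=
        congrArg Fin.val e
      have hsu := (s u).is_lt
      have hsv := (s v).is_lt
      have hba : altPos n (g u) = altPos n (g v) := by omega
      exact hgne (haltinj _ _ (hglt u) (hglt v) hba)
    simp only [blowup, SimpleGraph.fromRel_adj]
    refine ⟨hfne, ?_⟩
    have hsu := (s u).is_lt
    have hsv := (s v).is_lt
    rcases hadj u v h with h1 | h1
    · left
      refine ⟨g u, by have := hglt v; omega, by omega, ?_⟩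
      rw [h1]
      omega
    · right
      refine ⟨g v, by have := hglt u; omega, by omega, ?_⟩
      rw [h1]
      omega
end

section
/- Let 𝒢 be an ordered graph on n vertices, let s, t, M be positive integers, and suppose that for every partition of the vertices of 𝒢 into t (possibly empty) order-obeying intervals each of size at most s, more than M pairs of intervals (including pairs of an interval with itself) are joined by at least one edge of 𝒢. If the number of such interval partitions of 𝒢 is at most P, and P · 2^{−M−1} < 1/2, then OR(𝒢) ≥ st. -/
open Finset in
lemma fixed_card_le {α : Type*} [Fintype α] [DecidableEq α] (A : Finset α) (col : Bool) :
    (Finset.univ.filter (fun χ : α → Bool => ∀ a ∈ A, χ a = col)).card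
      ≤ 2 ^ (Fintype.card α - A.card) := by
  classical
  have h : (Finset.univ.filter (fun χ : α → Bool => ∀ a ∈ A, χ a = col)).card
      ≤ (Finset.univ : Finset ((↥(Aᶜ : Finset α)) → Bool)).card := by
    apply Finset.card_le_card_of_injOn (fun χ x => χ x.1)
    · intro _ _; exact Finset.mem_univ _
    · intro χ₁ h₁ χ₂ h₂ h
      simp only [Finset.coe_filter, Set.mem_setOf_eq] at h₁ h₂
      funext x
      by_cases hx : x ∈ A
      · rw [h₁.2 x hx, h₂.2 x hx]
      · exact congrFun h ⟨x, Finset.mem_compl.2 hx⟩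
  calc _ ≤ _ := h
    _ = 2 ^ (Fintype.card α - A.card) := by
        rw [Finset.card_univ, Fintype.card_fun, Fintype.card_bool, Fintype.card_coe,
          Finset.card_compl]

open Classical in
theorem stmt17 (n s t M P : ℕ) (hn : 0 < n) (hs : 0 < s) (ht : 0 < t) (hM : 0 < M)
    (G : SimpleGraph (Fin n))
    (hpart : ∀ g : Fin n → Fin t, Monotone g →
      (∀ i, (Finset.univ.filter (fun v => g v = i)).card ≤ s) →
      M < (Finset.univ.filter (fun p : Fin t × Fin t =>
        p.1 ≤ p.2 ∧ ∃ u v, g u = p.1 ∧ g v = p.2 ∧ G.Adj u v)).card)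
    (hP : Nat.card {g : Fin n → Fin t // Monotone g ∧
        ∀ i, (Finset.univ.filter (fun v => g v = i)).card ≤ s} ≤ P)
    (hPM : (P : ℝ) * (2 : ℝ) ^ (-(M : ℝ) - 1) < 1 / 2) :
    ∃ c : Sym2 (Fin (s * t)) → Bool,
      ¬ ∃ (f : Fin n → Fin (s * t)) (col : Bool),
        StrictMono f ∧ ∀ u v, G.Adj u v → c s(f u, f v) = col := by
  classical
  set N := Fintype.card (Sym2 (Fin t)) with hNdef
  set S := {g : Fin n → Fin t // Monotone g ∧
      ∀ i, (Finset.univ.filter (fun v => g v = i)).card ≤ s} with hSdef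
  haveI : Fintype S := Fintype.ofFinite _
  -- P < 2^M
  have hP2 : P < 2 ^ M := by
    have hcast : (P : ℝ) < 2 ^ M := by
      have he : (-(M:ℝ) - 1) = -((M + 1 : ℕ) : ℝ) := by push_cast; ring
      rw [he, Real.rpow_neg (by norm_num), Real.rpow_natCast] at hPM
      have hpos : (0:ℝ) < 2 ^ (M + 1) := by positivity
      have h2 : (P : ℝ) < 1 / 2 * 2 ^ (M + 1) := by
        rw [← div_eq_mul_inv] at hPM
        exact (div_lt_iff₀ hpos).1 hPM
      calc (P:ℝ) < 1 / 2 * 2 ^ (M + 1) := h2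
        _ = 2 ^ M := by rw [pow_succ]; ring
    exact_mod_cast hcast
  -- the "fixed" set of block pairs for g
  let A : (Fin n → Fin t) → Finset (Sym2 (Fin t)) := fun g =>
    (Finset.univ.filter (fun p : Fin t × Fin t =>
      p.1 ≤ p.2 ∧ ∃ u v, g u = p.1 ∧ g v = p.2 ∧ G.Adj u v)).image (fun p => s(p.1, p.2))
  have hAcard : ∀ g : S, M < (A g.1).card := by
    intro g
    have hinj : Set.InjOn (fun p : Fin t × Fin t => s(p.1, p.2))
        ↑(Finset.univ.filter (fun p : Fin t × Fin t =>
          p.1 ≤ p.2 ∧ ∃ u v, g.1 u = p.1 ∧ g.1 v = p.2 ∧ G.Adj u v)) := by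
      intro p hp q hq h
      simp only [Finset.coe_filter, Set.mem_setOf_eq] at hp hq
      rcases Sym2.eq_iff.mp h with ⟨h1, h2⟩ | ⟨h1, h2⟩
      · exact Prod.ext h1 h2
      · have e1 : p.2 ≤ p.1 := by rw [h2, h1]; exact hq.2.1
        have heq : p.1 = p.2 := le_antisymm hp.2.1 e1
        exact Prod.ext (heq.trans h2) (heq.symm.trans h1)
    rw [Finset.card_image_of_injOn hinj]
    exact hpart g.1 g.2.1 g.2.2
  let Bad : (Fin n → Fin t) → Bool → Finset (Sym2 (Fin t) → Bool) := fun g col =>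
    Finset.univ.filter (fun χ => ∀ q ∈ A g, χ q = col)
  have hBad : ∀ (g : S) (col : Bool), (Bad g.1 col).card ≤ 2 ^ (N - (M + 1)) := by
    intro g col
    calc (Bad g.1 col).card ≤ 2 ^ (N - (A g.1).card) := fixed_card_le _ _
      _ ≤ 2 ^ (N - (M + 1)) := by
          apply Nat.pow_le_pow_right (by norm_num)
          exact Nat.sub_le_sub_left (hAcard g) N
  let B : Finset (Sym2 (Fin t) → Bool) :=
    Finset.univ.biUnion (fun gc : S × Bool => Bad gc.1.1 gc.2)
  have hBcard : B.card < 2 ^ N := by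
    have hb1 : B.card ≤ Fintype.card (S × Bool) * 2 ^ (N - (M + 1)) := by
      calc B.card ≤ ∑ gc : S × Bool, (Bad gc.1.1 gc.2).card := Finset.card_biUnion_le
        _ ≤ Finset.univ.card • 2 ^ (N - (M + 1)) :=
            Finset.sum_le_card_nsmul _ _ _ (fun gc _ => hBad gc.1 gc.2)
        _ = Fintype.card (S × Bool) * 2 ^ (N - (M + 1)) := by
            rw [Finset.card_univ, smul_eq_mul]
    rcases isEmpty_or_nonempty S with hS | hS
    · have : Fintype.card (S × Bool) = 0 := by simp [Fintype.card_prod]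
      rw [this, Nat.zero_mul] at hb1
      exact lt_of_le_of_lt hb1 (Nat.pow_pos (by norm_num) : 0 < 2 ^ N)
    · obtain ⟨g⟩ := hS
      have hNM : M + 1 ≤ N := by
        have h1 : M + 1 ≤ (A g.1).card := hAcard g
        have h2 : (A g.1).card ≤ N := by
          rw [hNdef, ← Finset.card_univ]
          exact Finset.card_le_univ _
        omega
      have hSP : Fintype.card S ≤ P := by
        rw [← Nat.card_eq_fintype_card]; exact hP
      have hb2 : Fintype.card (S × Bool) * 2 ^ (N - (M + 1))
          ≤ 2 * P * 2 ^ (N - (M + 1)) := by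
        apply Nat.mul_le_mul_right
        rw [Fintype.card_prod, Fintype.card_bool]
        omega
      have hb3 : 2 * P * 2 ^ (N - (M + 1)) < 2 ^ N := by
        have hx : (0:ℕ) < 2 ^ (N - (M + 1)) := Nat.pow_pos (by norm_num)
        have : 2 * P * 2 ^ (N - (M + 1)) < 2 * 2 ^ M * 2 ^ (N - (M + 1)) := by
          have hPP : 2 * P < 2 * 2 ^ M := by omega
          exact Nat.mul_lt_mul_of_lt_of_le hPP le_rfl hx
        calc 2 * P * 2 ^ (N - (M + 1)) < 2 * 2 ^ M * 2 ^ (N - (M + 1)) := this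
          _ = 2 ^ (M + 1) * 2 ^ (N - (M + 1)) := by ring
          _ = 2 ^ (M + 1 + (N - (M + 1))) := (pow_add 2 _ _).symm
          _ = 2 ^ N := by rw [Nat.add_sub_cancel' hNM]
      omega
  -- pick a good χ
  have hex : ∃ χ : Sym2 (Fin t) → Bool, χ ∉ B := by
    by_contra hcon
    push_neg at hcon
    have : B = Finset.univ := Finset.eq_univ_iff_forall.2 hcon
    rw [this, Finset.card_univ, Fintype.card_fun, Fintype.card_bool] at hBcard
    exact lt_irrefl _ hBcard
  obtain ⟨χ, hχ⟩ := hex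
  -- block map
  have hdivlt : ∀ x : Fin (s * t), x.1 / s < t := by
    intro x
    rw [Nat.div_lt_iff_lt_mul hs]
    calc x.1 < s * t := x.2
      _ = t * s := Nat.mul_comm s t
  let b : Fin (s * t) → Fin t := fun x => ⟨x.1 / s, hdivlt x⟩
  refine ⟨fun q => χ (Sym2.map b q), ?_⟩
  rintro ⟨f, col, hf, hmono⟩
  set g : Fin n → Fin t := fun v => b (f v) with hg
  have hgmono : Monotone g := by
    intro u v huv
    have h1 : (f u).1 ≤ (f v).1 := Fin.le_def.mp (hf.monotone huv)
    exact Fin.mk_le_mk.mpr (Nat.div_le_div_right h1)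
  have hfib : ∀ i, (Finset.univ.filter (fun v => g v = i)).card ≤ s := by
    intro i
    have h : (Finset.univ.filter (fun v => g v = i)).card
        ≤ (Finset.univ : Finset (Fin s)).card := by
      apply Finset.card_le_card_of_injOn
        (fun v => (⟨(f v).1 % s, Nat.mod_lt _ hs⟩ : Fin s))
      · intro _ _; exact Finset.mem_univ _
      · intro u hu v hv h
        simp only [Finset.coe_filter, Set.mem_setOf_eq] at hu hv
        have hdu : (f u).1 / s = (i : Fin t).1 := congrArg Fin.val hu.2
        have hdv : (f v).1 / s = (i : Fin t).1 := congrArg Fin.val hv.2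
        have hmod : (f u).1 % s = (f v).1 % s := congrArg Fin.val h
        have heq : (f u).1 = (f v).1 := by
          have hd : (f u).1 / s = (f v).1 / s := hdu.trans hdv.symm
          have h1 := Nat.div_add_mod (f u).1 s
          have h2 := Nat.div_add_mod (f v).1 s
          rw [hd, hmod] at h1
          exact h1.symm.trans h2
        exact hf.injective (Fin.ext heq)
    simpa using h
  have hgS : g ∈ {g : Fin n → Fin t | Monotone g ∧
      ∀ i, (Finset.univ.filter (fun v => g v = i)).card ≤ s} := ⟨hgmono, hfib⟩
  have hχBad : χ ∈ Bad g col := by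
    simp only [Bad, Finset.mem_filter, Finset.mem_univ, true_and]
    intro q hq
    simp only [A, Finset.mem_image, Finset.mem_filter, Finset.mem_univ, true_and] at hq
    obtain ⟨p, ⟨hple, u, v, hu, hv, hadj⟩, hpq⟩ := hq
    have : χ (Sym2.map b s(f u, f v)) = col := hmono u v hadj
    rw [Sym2.map_pair_eq] at this
    rw [← hpq, ← hu, ← hv]
    exact this
  have : χ ∈ B := Finset.mem_biUnion.2 ⟨(⟨g, hgmono, hfib⟩, col), Finset.mem_univ _, hχBad⟩
  exact hχ this
end
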